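/- arXiv:2506.03475 — 4 statements merged into one kernel-verified Lean document; each statement's English description precedes it below -/
import Mathlib

section
/- For all τ in the upper half-plane, g₃'(τ) = (−i/(6π))·(g₂(τ)² − 18η₁(τ)g₃(τ)). -/
open Complex Filter Asymptotics Set

noncomputable section

/-- q = e^{2πiτ} -/
def qq (τ : ℂ) : ℂ := Complex.exp (2 * (Real.pi : ℂ) * Complex.I * τ)

/-- divisor power sum σ_k(n) as a complex number -/
def sigmaC (k n : ℕ) : ℂ := ∑ d ∈ n.divisors, (d : ℂ) ^ k

/-- normalized Eisenstein series E₂ -/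
def E2 (τ : ℂ) : ℂ := 1 - 24 * ∑' n : ℕ, sigmaC 1 (n + 1) * qq τ ^ (n + 1)

/-- normalized Eisenstein series E₄ -/
def E4 (τ : ℂ) : ℂ := 1 + 240 * ∑' n : ℕ, sigmaC 3 (n + 1) * qq τ ^ (n + 1)

/-- normalized Eisenstein series E₆ -/
def E6 (τ : ℂ) : ℂ := 1 - 504 * ∑' n : ℕ, sigmaC 5 (n + 1) * qq τ ^ (n + 1)

/-- elliptic invariant g₂ -/
def g2 (τ : ℂ) : ℂ := (4 * (Real.pi : ℂ) ^ 4 / 3) * E4 τ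

/-- elliptic invariant g₃ -/
def g3 (τ : ℂ) : ℂ := (8 * (Real.pi : ℂ) ^ 6 / 27) * E6 τ

/-- quasi-period η₁ -/
def eta1 (τ : ℂ) : ℂ := ((Real.pi : ℂ) ^ 2 / 3) * E2 τ

/-- quasi-period η₂ (Legendre relation) -/
def eta2 (τ : ℂ) : ℂ := τ * eta1 τ - 2 * (Real.pi : ℂ) * Complex.I

/-- the function h = g₂² − 18η₁g₃ -/
def hh (τ : ℂ) : ℂ := g2 τ ^ 2 - 18 * eta1 τ * g3 τ

/-- the family f_C -/
def f (C τ : ℂ) : ℂ := (C - τ) * g2 τ ^ 2 - 18 * (C * eta1 τ - eta2 τ) * g3 τ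

end



section Aux
open Finset

def Quad (n : ℕ) : Finset (ℕ × ℕ × ℕ × ℕ) :=
  ((Finset.Icc 1 n) ×ˢ (Finset.Icc 1 n) ×ˢ (Finset.Icc 1 n) ×ˢ (Finset.Icc 1 n)).filter
    (fun p => p.1 * p.2.2.1 + p.2.1 * p.2.2.2 = n)
lemma mem_Quad {n : ℕ} {p : ℕ × ℕ × ℕ × ℕ} :
    p ∈ Quad n ↔ 1 ≤ p.1 ∧ 1 ≤ p.2.1 ∧ 1 ≤ p.2.2.1 ∧ 1 ≤ p.2.2.2 ∧
      p.1 * p.2.2.1 + p.2.1 * p.2.2.2 = n := by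
  obtain ⟨a, b, x, y⟩ := p
  simp only [Quad, Finset.mem_filter, Finset.mem_product, Finset.mem_Icc]
  constructor
  · rintro ⟨⟨⟨h1,-⟩,⟨h2,-⟩,⟨h3,-⟩,⟨h4,-⟩⟩, h5⟩
    exact ⟨h1, h2, h3, h4, h5⟩
  · rintro ⟨h1, h2, h3, h4, h5⟩
    have ha : a ≤ n := by nlinarith
    have hb : b ≤ n := by nlinarith
    have hx : x ≤ n := by nlinarith
    have hy : y ≤ n := by nlinarith
    exact ⟨⟨⟨h1,ha⟩,⟨h2,hb⟩,⟨h3,hx⟩,⟨h4,hy⟩⟩, h5⟩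

/-- shear: region x > y maps to region a < b -/
lemma shear1 (n : ℕ) (F : ℕ → ℕ → ℂ) :
    ∑ p ∈ (Quad n).filter (fun p => p.2.2.2 < p.2.2.1), F p.1 p.2.1
    = ∑ p ∈ (Quad n).filter (fun p => p.1 < p.2.1), F p.1 (p.2.1 - p.1) := by
  refine Finset.sum_nbij' (i := fun p => (p.1, p.1 + p.2.1, p.2.2.1 - p.2.2.2, p.2.2.2))
    (j := fun p => (p.1, p.2.1 - p.1, p.2.2.1 + p.2.2.2, p.2.2.2)) ?_ ?_ ?_ ?_ ?_
  · rintro ⟨a,b,x,y⟩ hp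
    simp only [Finset.mem_filter, mem_Quad] at hp ⊢
    obtain ⟨⟨h1,h2,h3,h4,h5⟩,h6⟩ := hp
    have e1 : a*(x-y) + a*y = a*x := by rw [← Nat.mul_add]; congr 1; omega
    refine ⟨⟨h1, by omega, by omega, h4, ?_⟩, by omega⟩
    calc a*(x-y) + (a+b)*y = (a*(x-y) + a*y) + b*y := by ring
    _ = n := by rw [e1]; exact h5
  · rintro ⟨a,b,x,y⟩ hp
    simp only [Finset.mem_filter, mem_Quad] at hp ⊢
    obtain ⟨⟨h1,h2,h3,h4,h5⟩,h6⟩ := hp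
    have e1 : (b-a)*y + a*y = b*y := by rw [← Nat.add_mul]; congr 1; omega
    refine ⟨⟨h1, by omega, by omega, h4, ?_⟩, by omega⟩
    calc a*(x+y) + (b-a)*y = a*x + ((b-a)*y + a*y) := by ring
    _ = n := by rw [e1]; exact h5
  · rintro ⟨a,b,x,y⟩ hp
    simp only [Finset.mem_filter, mem_Quad] at hp
    simp only [Prod.mk.injEq]
    exact ⟨trivial, by omega, by omega, trivial⟩
  · rintro ⟨a,b,x,y⟩ hp
    simp only [Finset.mem_filter, mem_Quad] at hp
    simp only [Prod.mk.injEq]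
    exact ⟨trivial, by omega, by omega, trivial⟩
  · rintro ⟨a,b,x,y⟩ hp
    simp only
    congr 1
    omega

/-- shear: region x < y maps to region b < a -/
lemma shear2 (n : ℕ) (F : ℕ → ℕ → ℂ) :
    ∑ p ∈ (Quad n).filter (fun p => p.2.2.1 < p.2.2.2), F p.1 p.2.1
    = ∑ p ∈ (Quad n).filter (fun p => p.2.1 < p.1), F (p.1 - p.2.1) p.2.1 := by
  refine Finset.sum_nbij' (i := fun p => (p.1 + p.2.1, p.2.1, p.2.2.1, p.2.2.2 - p.2.2.1))
    (j := fun p => (p.1 - p.2.1, p.2.1, p.2.2.1, p.2.2.2 + p.2.2.1)) ?_ ?_ ?_ ?_ ?_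
  · rintro ⟨a,b,x,y⟩ hp
    simp only [Finset.mem_filter, mem_Quad] at hp ⊢
    obtain ⟨⟨h1,h2,h3,h4,h5⟩,h6⟩ := hp
    have e1 : b*(y-x) + b*x = b*y := by rw [← Nat.mul_add]; congr 1; omega
    refine ⟨⟨by omega, h2, h3, by omega, ?_⟩, by omega⟩
    calc (a+b)*x + b*(y-x) = a*x + (b*(y-x) + b*x) := by ring
    _ = n := by rw [e1]; exact h5
  · rintro ⟨a,b,x,y⟩ hp
    simp only [Finset.mem_filter, mem_Quad] at hp ⊢
    obtain ⟨⟨h1,h2,h3,h4,h5⟩,h6⟩ := hp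
    have e1 : (a-b)*x + b*x = a*x := by rw [← Nat.add_mul]; congr 1; omega
    refine ⟨⟨by omega, h2, h3, by omega, ?_⟩, by omega⟩
    calc (a-b)*x + b*(y+x) = ((a-b)*x + b*x) + b*y := by ring
    _ = n := by rw [e1]; exact h5
  · rintro ⟨a,b,x,y⟩ hp
    simp only [Finset.mem_filter, mem_Quad] at hp
    simp only [Prod.mk.injEq]
    exact ⟨by omega, trivial, trivial, by omega⟩
  · rintro ⟨a,b,x,y⟩ hp
    simp only [Finset.mem_filter, mem_Quad] at hp
    simp only [Prod.mk.injEq]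
    exact ⟨by omega, trivial, trivial, by omega⟩
  · rintro ⟨a,b,x,y⟩ hp
    simp only
    congr 1
    omega

/-- x = y diagonal: maps to divisor sum -/
lemma diagxy (n : ℕ) (F : ℕ → ℕ → ℂ) :
    ∑ p ∈ (Quad n).filter (fun p => p.2.2.1 = p.2.2.2), F p.1 p.2.1
    = ∑ d ∈ n.divisors, ∑ u ∈ Finset.Ico 1 d, F u (d - u) := by
  rw [Finset.sum_sigma' n.divisors (fun d => Finset.Ico 1 d) (fun d u => F u (d - u))]
  refine Finset.sum_nbij' (i := fun p => (⟨p.1 + p.2.1, p.1⟩ : Σ _ : ℕ, ℕ))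
    (j := fun x => (x.2, x.1 - x.2, n / x.1, n / x.1)) ?_ ?_ ?_ ?_ ?_
  · rintro ⟨a,b,x,y⟩ hp
    simp only [Finset.mem_filter, mem_Quad] at hp
    obtain ⟨⟨h1,h2,h3,h4,h5⟩,h6⟩ := hp
    subst h6
    have hn : (a+b) * x = n := by rw [Nat.add_mul]; omega
    simp only [Finset.mem_sigma, Nat.mem_divisors, Finset.mem_Ico]
    have hx1 : 1 * 1 ≤ (a + b) * x := Nat.mul_le_mul (by omega) (by omega)
    exact ⟨⟨⟨x, hn.symm⟩, by omega⟩, h1, by omega⟩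
  · rintro ⟨d,u⟩ hx
    simp only [Finset.mem_sigma, Nat.mem_divisors, Finset.mem_Ico] at hx
    obtain ⟨⟨⟨e, he⟩, hn⟩, hu1, hud⟩ := hx
    have hd : 0 < d := by omega
    have hdiv : d * (n / d) = n := Nat.mul_div_cancel' ⟨e, he⟩
    have hnd : 1 ≤ n / d := by
      rcases Nat.eq_zero_or_pos (n / d) with h | h
      · rw [h, mul_zero] at hdiv; omega
      · exact h
    simp only [Finset.mem_filter, mem_Quad]
    refine ⟨⟨hu1, by omega, hnd, hnd, ?_⟩, trivial⟩
    rw [← Nat.add_mul]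
    rw [show u + (d - u) = d by omega]
    exact hdiv
  · rintro ⟨a,b,x,y⟩ hp
    simp only [Finset.mem_filter, mem_Quad] at hp
    obtain ⟨⟨h1,h2,h3,h4,h5⟩,h6⟩ := hp
    subst h6
    have hn : (a+b) * x = n := by rw [Nat.add_mul]; omega
    have hx : n / (a + b) = x := by
      rw [← hn]; exact Nat.mul_div_cancel_left x (by omega)
    simp only [Prod.mk.injEq]
    exact ⟨trivial, by omega, hx, hx⟩
  · rintro ⟨d,u⟩ hx
    simp only [Finset.mem_sigma, Nat.mem_divisors, Finset.mem_Ico] at hx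
    simp only
    rw [show u + (d - u) = d by omega]
  · rintro ⟨a,b,x,y⟩ hp
    simp only [Finset.mem_filter, mem_Quad] at hp
    simp only
    congr 1
    omega

/-- a = b diagonal -/
lemma diagab (n : ℕ) (F : ℕ → ℕ → ℂ) :
    ∑ p ∈ (Quad n).filter (fun p => p.1 = p.2.1), F p.1 p.2.1
    = ∑ de ∈ n.divisorsAntidiagonal, ((de.2 : ℂ) - 1) * F de.1 de.1 := by
  have key : ∑ p ∈ (Quad n).filter (fun p => p.1 = p.2.1), F p.1 p.2.1
      = ∑ x ∈ n.divisorsAntidiagonal.sigma (fun de => Finset.Ico 1 de.2), F x.1.1 x.1.1 := by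
    refine Finset.sum_nbij' (i := fun p => (⟨(p.1, p.2.2.1 + p.2.2.2), p.2.2.1⟩ : Σ _ : ℕ × ℕ, ℕ))
      (j := fun x => (x.1.1, x.1.1, x.2, x.1.2 - x.2)) ?_ ?_ ?_ ?_ ?_
    · rintro ⟨a,b,x,y⟩ hp
      simp only [Finset.mem_filter, mem_Quad] at hp
      obtain ⟨⟨h1,h2,h3,h4,h5⟩,h6⟩ := hp
      have hn : a * (x + y) = n := by rw [Nat.mul_add, h6]; rw [h6] at h5; omega
      simp only [Finset.mem_sigma, Nat.mem_divisorsAntidiagonal, Finset.mem_Ico]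
      have hx1 : 1 * 1 ≤ a * (x + y) := Nat.mul_le_mul (by omega) (by omega)
      exact ⟨⟨hn, by omega⟩, h3, by omega⟩
    · rintro ⟨⟨d,e⟩,x⟩ hx
      simp only [Finset.mem_sigma, Nat.mem_divisorsAntidiagonal, Finset.mem_Ico] at hx
      obtain ⟨⟨he, hn⟩, hx1, hxe⟩ := hx
      simp only [Finset.mem_filter, mem_Quad]
      have hd : 1 ≤ d := by
        rcases Nat.eq_zero_or_pos d with h | h
        · rw [h, zero_mul] at he; omega
        · exact h
      refine ⟨⟨hd, hd, hx1, by omega, ?_⟩, trivial⟩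
      rw [← Nat.mul_add, show x + (e - x) = e by omega]
      exact he
    · rintro ⟨a,b,x,y⟩ hp
      simp only [Finset.mem_filter, mem_Quad] at hp
      obtain ⟨⟨h1,h2,h3,h4,h5⟩,h6⟩ := hp
      simp only [Prod.mk.injEq]
      exact ⟨trivial, h6, trivial, by omega⟩
    · rintro ⟨⟨d,e⟩,x⟩ hx
      simp only [Finset.mem_sigma, Nat.mem_divisorsAntidiagonal, Finset.mem_Ico] at hx
      simp only
      rw [show x + (e - x) = e by omega]
    · rintro ⟨a,b,x,y⟩ hp
      simp only [Finset.mem_filter, mem_Quad] at hp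
      simp only
      rw [hp.2]
  rw [key, Finset.sum_sigma]
  refine Finset.sum_congr rfl ?_
  rintro ⟨d,e⟩ hde
  simp only
  rw [Finset.sum_const, Nat.card_Ico, nsmul_eq_mul]
  have he : 1 ≤ e := by
    rcases Nat.mem_divisorsAntidiagonal.mp hde with ⟨h, hn⟩
    rcases Nat.eq_zero_or_pos e with h0 | h0
    · rw [h0, mul_zero] at h; omega
    · exact h0
  rw [Nat.cast_sub he]
  push_cast
  ring

lemma sum_tri_xy (n : ℕ) (g : ℕ×ℕ×ℕ×ℕ → ℂ) :
    ∑ p ∈ Quad n, g p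
      = ∑ p ∈ (Quad n).filter (fun p => p.2.2.1 < p.2.2.2), g p
      + ∑ p ∈ (Quad n).filter (fun p => p.2.2.2 < p.2.2.1), g p
      + ∑ p ∈ (Quad n).filter (fun p => p.2.2.1 = p.2.2.2), g p := by
  classical
  have h := Finset.sum_filter_add_sum_filter_not (Quad n) (fun p => p.2.2.1 < p.2.2.2) g
  have h2 := Finset.sum_filter_add_sum_filter_not
    ((Quad n).filter (fun p => ¬ p.2.2.1 < p.2.2.2)) (fun p => p.2.2.2 < p.2.2.1) g
  rw [Finset.filter_filter, Finset.filter_filter] at h2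
  have e1 : (Quad n).filter (fun p => ¬ p.2.2.1 < p.2.2.2 ∧ p.2.2.2 < p.2.2.1)
      = (Quad n).filter (fun p => p.2.2.2 < p.2.2.1) :=
    Finset.filter_congr (fun p _ => by omega)
  have e2 : (Quad n).filter (fun p => ¬ p.2.2.1 < p.2.2.2 ∧ ¬ p.2.2.2 < p.2.2.1)
      = (Quad n).filter (fun p => p.2.2.1 = p.2.2.2) :=
    Finset.filter_congr (fun p _ => by omega)
  rw [e1, e2] at h2
  linear_combination -h - h2

lemma sum_tri_ab (n : ℕ) (g : ℕ×ℕ×ℕ×ℕ → ℂ) :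
    ∑ p ∈ Quad n, g p
      = ∑ p ∈ (Quad n).filter (fun p => p.1 < p.2.1), g p
      + ∑ p ∈ (Quad n).filter (fun p => p.2.1 < p.1), g p
      + ∑ p ∈ (Quad n).filter (fun p => p.1 = p.2.1), g p := by
  classical
  have h := Finset.sum_filter_add_sum_filter_not (Quad n) (fun p => p.1 < p.2.1) g
  have h2 := Finset.sum_filter_add_sum_filter_not
    ((Quad n).filter (fun p => ¬ p.1 < p.2.1)) (fun p => p.2.1 < p.1) g
  rw [Finset.filter_filter, Finset.filter_filter] at h2
  have e1 : (Quad n).filter (fun p => ¬ p.1 < p.2.1 ∧ p.2.1 < p.1)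
      = (Quad n).filter (fun p => p.2.1 < p.1) :=
    Finset.filter_congr (fun p _ => by omega)
  have e2 : (Quad n).filter (fun p => ¬ p.1 < p.2.1 ∧ ¬ p.2.1 < p.1)
      = (Quad n).filter (fun p => p.1 = p.2.1) :=
    Finset.filter_congr (fun p _ => by omega)
  rw [e1, e2] at h2
  linear_combination -h - h2

/-- Liouville-type master identity -/
lemma master (n : ℕ) (F P : ℕ → ℕ → ℂ)
    (hlt : ∀ a b : ℕ, 1 ≤ a → a < b → F a (b - a) = F a b - P a b)
    (hgt : ∀ a b : ℕ, 1 ≤ b → b < a → F (a - b) b = F a b - P a b) :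
    ∑ p ∈ Quad n, P p.1 p.2.1
      = ∑ de ∈ n.divisorsAntidiagonal, ((de.2 : ℂ) - 1) * (P de.1 de.1 - F de.1 de.1)
      + ∑ d ∈ n.divisors, ∑ u ∈ Finset.Ico 1 d, F u (d - u) := by
  classical
  have h1 := sum_tri_xy n (fun p => F p.1 p.2.1)
  rw [shear1 n F, shear2 n F, diagxy n F] at h1
  have hsub1 : ∑ p ∈ (Quad n).filter (fun p => p.1 < p.2.1), F p.1 (p.2.1 - p.1)
      = ∑ p ∈ (Quad n).filter (fun p => p.1 < p.2.1), F p.1 p.2.1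
      - ∑ p ∈ (Quad n).filter (fun p => p.1 < p.2.1), P p.1 p.2.1 := by
    rw [← Finset.sum_sub_distrib]
    refine Finset.sum_congr rfl ?_
    intro p hp
    rw [Finset.mem_filter, mem_Quad] at hp
    exact hlt p.1 p.2.1 hp.1.1 hp.2
  have hsub2 : ∑ p ∈ (Quad n).filter (fun p => p.2.1 < p.1), F (p.1 - p.2.1) p.2.1
      = ∑ p ∈ (Quad n).filter (fun p => p.2.1 < p.1), F p.1 p.2.1
      - ∑ p ∈ (Quad n).filter (fun p => p.2.1 < p.1), P p.1 p.2.1 := by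
    rw [← Finset.sum_sub_distrib]
    refine Finset.sum_congr rfl ?_
    intro p hp
    rw [Finset.mem_filter, mem_Quad] at hp
    exact hgt p.1 p.2.1 hp.1.2.1 hp.2
  rw [hsub1, hsub2] at h1
  have h2 := sum_tri_ab n (fun p => F p.1 p.2.1)
  have h3 := sum_tri_ab n (fun p => P p.1 p.2.1)
  have hd1 := diagab n F
  have hd2 := diagab n P
  have hdA : ∑ de ∈ n.divisorsAntidiagonal, ((de.2 : ℂ) - 1) * (P de.1 de.1 - F de.1 de.1)
      = ∑ de ∈ n.divisorsAntidiagonal, ((de.2 : ℂ) - 1) * P de.1 de.1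
      - ∑ de ∈ n.divisorsAntidiagonal, ((de.2 : ℂ) - 1) * F de.1 de.1 := by
    rw [← Finset.sum_sub_distrib]
    exact Finset.sum_congr rfl (fun de _ => by ring)
  linear_combination h3 + h1 - h2 + hd2 - hd1 - hdA

lemma sigmaC_eq_dA (k n : ℕ) : sigmaC k n = ∑ de ∈ n.divisorsAntidiagonal, (de.1 : ℂ) ^ k := by
  rw [sigmaC, ← Nat.sum_divisorsAntidiagonal (fun d e => (d : ℂ) ^ k)]

lemma convQuad (r s n : ℕ) :
    ∑ ij ∈ Finset.HasAntidiagonal.antidiagonal n, sigmaC r ij.1 * sigmaC s ij.2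
    = ∑ p ∈ Quad n, (p.1 : ℂ) ^ r * (p.2.1 : ℂ) ^ s := by
  have step1 : ∀ ij : ℕ × ℕ, sigmaC r ij.1 * sigmaC s ij.2
      = ∑ w ∈ ij.1.divisorsAntidiagonal ×ˢ ij.2.divisorsAntidiagonal,
          (w.1.1 : ℂ) ^ r * (w.2.1 : ℂ) ^ s := by
    intro ij
    rw [sigmaC_eq_dA, sigmaC_eq_dA, Finset.sum_mul_sum, Finset.sum_product]
  simp only [step1]
  rw [Finset.sum_sigma' (Finset.HasAntidiagonal.antidiagonal n)
    (fun ij => ij.1.divisorsAntidiagonal ×ˢ ij.2.divisorsAntidiagonal)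
    (fun ij w => (w.1.1 : ℂ) ^ r * (w.2.1 : ℂ) ^ s)]
  refine Finset.sum_nbij' (i := fun z => (z.2.1.1, z.2.2.1, z.2.1.2, z.2.2.2))
    (j := fun p => (⟨(p.1 * p.2.2.1, p.2.1 * p.2.2.2), ((p.1, p.2.2.1), (p.2.1, p.2.2.2))⟩ :
      Σ _ : ℕ × ℕ, (ℕ × ℕ) × (ℕ × ℕ))) ?_ ?_ ?_ ?_ ?_
  · rintro ⟨⟨i,j⟩, ⟨⟨a,x⟩,⟨b,y⟩⟩⟩ hz
    simp only [Finset.mem_sigma, Finset.HasAntidiagonal.mem_antidiagonal, Finset.mem_product,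
      Nat.mem_divisorsAntidiagonal] at hz
    obtain ⟨hij, ⟨hax, hi0⟩, ⟨hby, hj0⟩⟩ := hz
    rw [mem_Quad]
    simp only
    have ha : 1 ≤ a := Nat.one_le_iff_ne_zero.mpr (by rintro rfl; rw [zero_mul] at hax; omega)
    have hx : 1 ≤ x := Nat.one_le_iff_ne_zero.mpr (by rintro rfl; rw [mul_zero] at hax; omega)
    have hb : 1 ≤ b := Nat.one_le_iff_ne_zero.mpr (by rintro rfl; rw [zero_mul] at hby; omega)
    have hy : 1 ≤ y := Nat.one_le_iff_ne_zero.mpr (by rintro rfl; rw [mul_zero] at hby; omega)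
    exact ⟨ha, hb, hx, hy, by omega⟩
  · rintro ⟨a,b,x,y⟩ hp
    rw [mem_Quad] at hp
    dsimp only at hp ⊢
    obtain ⟨h1,h2,h3,h4,h5⟩ := hp
    simp only [Finset.mem_sigma, Finset.HasAntidiagonal.mem_antidiagonal, Finset.mem_product,
      Nat.mem_divisorsAntidiagonal]
    exact ⟨h5, ⟨trivial, Nat.mul_ne_zero (by omega) (by omega)⟩,
      ⟨trivial, Nat.mul_ne_zero (by omega) (by omega)⟩⟩
  · rintro ⟨⟨i,j⟩, ⟨⟨a,x⟩,⟨b,y⟩⟩⟩ hz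
    simp only [Finset.mem_sigma, Finset.HasAntidiagonal.mem_antidiagonal, Finset.mem_product,
      Nat.mem_divisorsAntidiagonal] at hz
    obtain ⟨hij, ⟨hax, hi0⟩, ⟨hby, hj0⟩⟩ := hz
    simp only
    rw [hax, hby]
  · rintro ⟨a,b,x,y⟩ hp
    simp only
  · rintro ⟨⟨i,j⟩, ⟨⟨a,x⟩,⟨b,y⟩⟩⟩ hz
    simp only

section powsums
open Finset

lemma powS (k : ℕ) (c : ℕ → ℂ)
    (hstep : ∀ d : ℕ, 1 ≤ d → c (d + 1) = c d + (d : ℂ) ^ k) (h1 : c 1 = 0) :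
    ∀ d : ℕ, 1 ≤ d → ∑ u ∈ Finset.Ico 1 d, (u : ℂ) ^ k = c d := by
  intro d hd
  induction d, hd using Nat.le_induction with
  | base => simp [h1]
  | succ d hd ih =>
    rw [Finset.sum_Ico_succ_top (by omega), ih, hstep d hd]

lemma powS0 (d : ℕ) (hd : 1 ≤ d) : ∑ u ∈ Finset.Ico 1 d, ((u:ℂ))^0 = (d:ℂ) - 1 :=
  powS 0 (fun d => (d:ℂ) - 1) (fun d _ => by push_cast; ring) (by norm_num) d hd
lemma powS1 (d : ℕ) (hd : 1 ≤ d) : ∑ u ∈ Finset.Ico 1 d, ((u:ℂ))^1 = ((d:ℂ)^2 - d)/2 :=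
  powS 1 (fun d => ((d:ℂ)^2 - d)/2) (fun d _ => by push_cast; ring) (by norm_num) d hd
lemma powS2 (d : ℕ) (hd : 1 ≤ d) :
    ∑ u ∈ Finset.Ico 1 d, ((u:ℂ))^2 = (2*(d:ℂ)^3 - 3*(d:ℂ)^2 + d)/6 :=
  powS 2 (fun d => (2*(d:ℂ)^3 - 3*(d:ℂ)^2 + d)/6) (fun d _ => by push_cast; ring) (by norm_num) d hd
lemma powS3 (d : ℕ) (hd : 1 ≤ d) :
    ∑ u ∈ Finset.Ico 1 d, ((u:ℂ))^3 = ((d:ℂ)^4 - 2*(d:ℂ)^3 + (d:ℂ)^2)/4 :=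
  powS 3 (fun d => ((d:ℂ)^4 - 2*(d:ℂ)^3 + (d:ℂ)^2)/4) (fun d _ => by push_cast; ring) (by norm_num) d hd
lemma powS4 (d : ℕ) (hd : 1 ≤ d) :
    ∑ u ∈ Finset.Ico 1 d, ((u:ℂ))^4 = (6*(d:ℂ)^5 - 15*(d:ℂ)^4 + 10*(d:ℂ)^3 - d)/30 :=
  powS 4 (fun d => (6*(d:ℂ)^5 - 15*(d:ℂ)^4 + 10*(d:ℂ)^3 - d)/30) (fun d _ => by push_cast; ring) (by norm_num) d hd
lemma powS5 (d : ℕ) (hd : 1 ≤ d) :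
    ∑ u ∈ Finset.Ico 1 d, ((u:ℂ))^5 = (2*(d:ℂ)^6 - 6*(d:ℂ)^5 + 5*(d:ℂ)^4 - (d:ℂ)^2)/12 :=
  powS 5 (fun d => (2*(d:ℂ)^6 - 6*(d:ℂ)^5 + 5*(d:ℂ)^4 - (d:ℂ)^2)/12) (fun d _ => by push_cast; ring) (by norm_num) d hd
lemma powS6 (d : ℕ) (hd : 1 ≤ d) :
    ∑ u ∈ Finset.Ico 1 d, ((u:ℂ))^6
      = (6*(d:ℂ)^7 - 21*(d:ℂ)^6 + 21*(d:ℂ)^5 - 7*(d:ℂ)^3 + d)/42 :=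
  powS 6 (fun d => (6*(d:ℂ)^7 - 21*(d:ℂ)^6 + 21*(d:ℂ)^5 - 7*(d:ℂ)^3 + d)/42) (fun d _ => by push_cast; ring) (by norm_num) d hd

end powsums

noncomputable section Fdefs

def F1C (a b : ℕ) : ℂ := ((a * b * (a + b) : ℕ) : ℂ)^2
def P1C (a b : ℕ) : ℂ := 4 * (a:ℂ)^3 * (b:ℂ)^3
def F2C (a b : ℕ) : ℂ := ((a^2 + a*b + b^2 : ℕ) : ℂ)^3
def P2C (a b : ℕ) : ℂ := 14 * (a:ℂ)^3 * (b:ℂ)^3 + 6 * (a:ℂ)^5 * (b:ℂ) + 6 * (a:ℂ) * (b:ℂ)^5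

lemma inner1 (d : ℕ) (hd : 1 ≤ d) :
    ∑ u ∈ Finset.Ico 1 d, F1C u (d - u) = ((d:ℂ)^7 - (d:ℂ)^3) / 30 := by
  have h : ∀ u ∈ Finset.Ico 1 d, F1C u (d - u)
      = (d:ℂ)^4 * (u:ℂ)^2 - 2*(d:ℂ)^3 * (u:ℂ)^3 + (d:ℂ)^2 * (u:ℂ)^4 := by
    intro u hu
    rw [Finset.mem_Ico] at hu
    have hud : u ≤ d := le_of_lt hu.2
    rw [F1C]
    push_cast [Nat.cast_sub hud]
    ring
  rw [Finset.sum_congr rfl h]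
  rw [Finset.sum_add_distrib, Finset.sum_sub_distrib, ← Finset.mul_sum, ← Finset.mul_sum,
    ← Finset.mul_sum, powS2 d hd, powS3 d hd, powS4 d hd]
  field_simp
  ring

lemma inner2 (d : ℕ) (hd : 1 ≤ d) :
    ∑ u ∈ Finset.Ico 1 d, F2C u (d - u)
      = (83/140) * (d:ℂ)^7 - (d:ℂ)^6 + (1/2) * (d:ℂ)^5 - (7/60) * (d:ℂ)^3 + (1/42) * (d:ℂ) := by
  have h : ∀ u ∈ Finset.Ico 1 d, F2C u (d - u)
      = (d:ℂ)^6 * (u:ℂ)^0 - 3*(d:ℂ)^5 * (u:ℂ)^1 + 6*(d:ℂ)^4 * (u:ℂ)^2 - 7*(d:ℂ)^3 * (u:ℂ)^3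
        + 6*(d:ℂ)^2 * (u:ℂ)^4 - 3*(d:ℂ) * (u:ℂ)^5 + (u:ℂ)^6 := by
    intro u hu
    rw [Finset.mem_Ico] at hu
    have hud : u ≤ d := le_of_lt hu.2
    rw [F2C]
    push_cast [Nat.cast_sub hud]
    ring
  rw [Finset.sum_congr rfl h]
  rw [Finset.sum_add_distrib, Finset.sum_sub_distrib, Finset.sum_add_distrib,
    Finset.sum_sub_distrib, Finset.sum_add_distrib, Finset.sum_sub_distrib,
    ← Finset.mul_sum, ← Finset.mul_sum, ← Finset.mul_sum, ← Finset.mul_sum, ← Finset.mul_sum,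
    ← Finset.mul_sum, powS0 d hd, powS1 d hd, powS2 d hd, powS3 d hd, powS4 d hd, powS5 d hd,
    powS6 d hd]
  field_simp
  ring

end Fdefs

section keyid
open Finset

lemma hlt1 : ∀ a b : ℕ, 1 ≤ a → a < b → F1C a (b - a) = F1C a b - P1C a b := by
  intro a b _ hab
  obtain ⟨c, rfl⟩ := Nat.exists_eq_add_of_lt hab
  rw [F1C, F1C, P1C, show a + c + 1 - a = c + 1 from by omega]
  push_cast; ring

lemma hgt1 : ∀ a b : ℕ, 1 ≤ b → b < a → F1C (a - b) b = F1C a b - P1C a b := by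
  intro a b _ hab
  obtain ⟨c, rfl⟩ := Nat.exists_eq_add_of_lt hab
  rw [F1C, F1C, P1C, show b + c + 1 - b = c + 1 from by omega]
  push_cast; ring

lemma hlt2 : ∀ a b : ℕ, 1 ≤ a → a < b → F2C a (b - a) = F2C a b - P2C a b := by
  intro a b _ hab
  obtain ⟨c, rfl⟩ := Nat.exists_eq_add_of_lt hab
  rw [F2C, F2C, P2C, show a + c + 1 - a = c + 1 from by omega]
  push_cast; ring

lemma hgt2 : ∀ a b : ℕ, 1 ≤ b → b < a → F2C (a - b) b = F2C a b - P2C a b := by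
  intro a b _ hab
  obtain ⟨c, rfl⟩ := Nat.exists_eq_add_of_lt hab
  rw [F2C, F2C, P2C, show b + c + 1 - b = c + 1 from by omega]
  push_cast; ring

lemma dAsum1 (n : ℕ) : ∑ de ∈ n.divisorsAntidiagonal, (de.2:ℂ) * (de.1:ℂ)^6
    = (n:ℂ) * sigmaC 5 n := by
  have h : ∀ de ∈ n.divisorsAntidiagonal, (de.2:ℂ) * (de.1:ℂ)^6 = (n:ℂ) * (de.1:ℂ)^5 := by
    intro de hde
    have h1 : de.1 * de.2 = n := (Nat.mem_divisorsAntidiagonal.mp hde).1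
    have h2 : (de.1:ℂ) * (de.2:ℂ) = (n:ℂ) := by exact_mod_cast congrArg (Nat.cast : ℕ → ℂ) h1
    linear_combination (de.1:ℂ)^5 * h2
  rw [Finset.sum_congr rfl h, ← Finset.mul_sum, ← sigmaC_eq_dA]

lemma key_identity (n : ℕ) :
    1008 * (n:ℂ) * sigmaC 5 n
      = 24 * sigmaC 1 n + 480 * sigmaC 3 n + 504 * sigmaC 5 n
      + 57600 * ∑ ij ∈ Finset.HasAntidiagonal.antidiagonal n, sigmaC 3 ij.1 * sigmaC 3 ij.2
      - 12096 * ∑ ij ∈ Finset.HasAntidiagonal.antidiagonal n, sigmaC 1 ij.1 * sigmaC 5 ij.2 := by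
  have hm1 := master n F1C P1C hlt1 hgt1
  have hm2 := master n F2C P2C hlt2 hgt2
  -- left sides in terms of conv sums
  have hL1 : ∑ p ∈ Quad n, P1C p.1 p.2.1
      = 4 * ∑ ij ∈ Finset.HasAntidiagonal.antidiagonal n, sigmaC 3 ij.1 * sigmaC 3 ij.2 := by
    rw [convQuad 3 3 n, Finset.mul_sum]
    exact Finset.sum_congr rfl (fun p _ => by rw [P1C]; ring)
  have hL2 : ∑ p ∈ Quad n, P2C p.1 p.2.1
      = 14 * ∑ ij ∈ Finset.HasAntidiagonal.antidiagonal n, sigmaC 3 ij.1 * sigmaC 3 ij.2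
      + 12 * ∑ ij ∈ Finset.HasAntidiagonal.antidiagonal n, sigmaC 1 ij.1 * sigmaC 5 ij.2 := by
    have hswap : ∑ ij ∈ Finset.HasAntidiagonal.antidiagonal n, sigmaC 5 ij.1 * sigmaC 1 ij.2
        = ∑ ij ∈ Finset.HasAntidiagonal.antidiagonal n, sigmaC 1 ij.1 * sigmaC 5 ij.2 := by
      rw [← Finset.Nat.sum_antidiagonal_swap (f := fun p => sigmaC 1 p.1 * sigmaC 5 p.2)]
      exact Finset.sum_congr rfl (fun p _ => by simp [mul_comm])
    have e1 : ∑ p ∈ Quad n, P2C p.1 p.2.1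
        = 14 * (∑ p ∈ Quad n, (p.1:ℂ)^3 * (p.2.1:ℂ)^3)
        + 6 * (∑ p ∈ Quad n, (p.1:ℂ)^5 * (p.2.1:ℂ)^1)
        + 6 * (∑ p ∈ Quad n, (p.1:ℂ)^1 * (p.2.1:ℂ)^5) := by
      rw [Finset.mul_sum, Finset.mul_sum, Finset.mul_sum, ← Finset.sum_add_distrib,
        ← Finset.sum_add_distrib]
      exact Finset.sum_congr rfl (fun p _ => by rw [P2C]; ring)
    rw [e1, ← convQuad 3 3 n, ← convQuad 5 1 n, ← convQuad 1 5 n, hswap]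
    ring
  -- right side of hm1
  have hR1a : ∑ de ∈ n.divisorsAntidiagonal, ((de.2:ℂ) - 1) * (P1C de.1 de.1 - F1C de.1 de.1)
      = 0 := by
    apply Finset.sum_eq_zero
    intro de _
    have : P1C de.1 de.1 - F1C de.1 de.1 = 0 := by rw [P1C, F1C]; push_cast; ring
    rw [this, mul_zero]
  have hR1b : ∑ d ∈ n.divisors, ∑ u ∈ Finset.Ico 1 d, F1C u (d - u)
      = (sigmaC 7 n - sigmaC 3 n) / 30 := by
    have h : ∀ d ∈ n.divisors, ∑ u ∈ Finset.Ico 1 d, F1C u (d - u)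
        = ((d:ℂ)^7 - (d:ℂ)^3) / 30 :=
      fun d hd => inner1 d (Nat.pos_of_mem_divisors hd)
    rw [Finset.sum_congr rfl h, sigmaC, sigmaC, ← Finset.sum_div, Finset.sum_sub_distrib]
  -- right side of hm2
  have hR2a : ∑ de ∈ n.divisorsAntidiagonal, ((de.2:ℂ) - 1) * (P2C de.1 de.1 - F2C de.1 de.1)
      = -((n:ℂ) * sigmaC 5 n) + sigmaC 6 n := by
    have h : ∀ de ∈ n.divisorsAntidiagonal, ((de.2:ℂ) - 1) * (P2C de.1 de.1 - F2C de.1 de.1)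
        = -((de.2:ℂ) * (de.1:ℂ)^6) + (de.1:ℂ)^6 := by
      intro de _
      have : P2C de.1 de.1 - F2C de.1 de.1 = -(de.1:ℂ)^6 := by rw [P2C, F2C]; push_cast; ring
      rw [this]; ring
    rw [Finset.sum_congr rfl h, Finset.sum_add_distrib, Finset.sum_neg_distrib, dAsum1,
      ← sigmaC_eq_dA]
  have hR2b : ∑ d ∈ n.divisors, ∑ u ∈ Finset.Ico 1 d, F2C u (d - u)
      = (83/140) * sigmaC 7 n - sigmaC 6 n + (1/2) * sigmaC 5 n - (7/60) * sigmaC 3 n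
        + (1/42) * sigmaC 1 n := by
    have h : ∀ d ∈ n.divisors, ∑ u ∈ Finset.Ico 1 d, F2C u (d - u)
        = (83/140) * (d:ℂ)^7 - (d:ℂ)^6 + (1/2) * (d:ℂ)^5 - (7/60) * (d:ℂ)^3 + (1/42) * (d:ℂ) :=
      fun d hd => inner2 d (Nat.pos_of_mem_divisors hd)
    rw [Finset.sum_congr rfl h]
    rw [Finset.sum_add_distrib, Finset.sum_sub_distrib, Finset.sum_add_distrib,
      Finset.sum_sub_distrib, ← Finset.mul_sum, ← Finset.mul_sum, ← Finset.mul_sum,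
      ← Finset.mul_sum]
    have hpow : ∀ k : ℕ, ∑ d ∈ n.divisors, (d:ℂ)^k = sigmaC k n := fun k => rfl
    have hpow1 : ∑ d ∈ n.divisors, (d:ℂ) = sigmaC 1 n := by
      rw [← hpow 1]; exact Finset.sum_congr rfl (fun d _ => (pow_one _).symm)
    rw [hpow 7, hpow 6, hpow 5, hpow 3, hpow1]
  rw [hL1, hR1a, hR1b, zero_add] at hm1
  rw [hL2, hR2a, hR2b] at hm2
  linear_combination (-17928 : ℂ) * hm1 + 1008 * hm2
end keyid

section analysis
open Complex Finset


lemma sigmaC_norm_le (k m : ℕ) : ‖sigmaC k m‖ ≤ (m:ℝ)^(k+1) := by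
  rw [sigmaC]
  calc ‖∑ d ∈ m.divisors, (d:ℂ)^k‖ ≤ ∑ d ∈ m.divisors, ‖(d:ℂ)^k‖ := norm_sum_le _ _
  _ ≤ ∑ d ∈ m.divisors, (m:ℝ)^k := by
      refine Finset.sum_le_sum (fun d hd => ?_)
      rw [norm_pow, Complex.norm_natCast]
      exact pow_le_pow_left₀ (by positivity) (Nat.cast_le.mpr (Nat.divisor_le hd)) k
  _ = (m.divisors.card : ℝ) * (m:ℝ)^k := by rw [Finset.sum_const, nsmul_eq_mul]
  _ ≤ (m:ℝ) * (m:ℝ)^k := by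
      refine mul_le_mul_of_nonneg_right ?_ (by positivity)
      have : m.divisors ⊆ Finset.Icc 1 m := fun d hd =>
        Finset.mem_Icc.mpr ⟨Nat.pos_of_mem_divisors hd, Nat.divisor_le hd⟩
      have := Finset.card_le_card this
      rw [Nat.card_Icc] at this
      exact_mod_cast le_trans (Nat.cast_le.mpr this) (by norm_num)
  _ = (m:ℝ)^(k+1) := by ring

lemma abs_qq_lt (τ : ℂ) (hτ : 0 < τ.im) : ‖qq τ‖ < 1 := by
  rw [qq, Complex.norm_exp]
  have hre : (2 * (Real.pi : ℂ) * Complex.I * τ).re = -(2 * Real.pi * τ.im) := by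
    simp [Complex.mul_re, Complex.mul_im]
  rw [hre, Real.exp_lt_one_iff]
  nlinarith [Real.pi_pos]

lemma abs_qq_le (τ : ℂ) : ‖qq τ‖ = Real.exp (-(2 * Real.pi * τ.im)) := by
  rw [qq, Complex.norm_exp]
  congr 1
  simp [Complex.mul_re, Complex.mul_im]


lemma summable_coef (K : ℕ) (c : ℕ → ℂ) (hc : ∀ m, ‖c m‖ ≤ (m:ℝ)^K) {q : ℂ} (hq : ‖q‖ < 1) :
    Summable (fun n => ‖c n * q^n‖) := by
  have hgeo : Summable (fun n : ℕ => (n:ℝ)^K * ‖q‖^n) :=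
    summable_pow_mul_geometric_of_norm_lt_one K
      (by rwa [Real.norm_eq_abs, _root_.abs_of_nonneg (norm_nonneg q)])
  refine hgeo.of_nonneg_of_le (fun n => norm_nonneg _) (fun n => ?_)
  rw [norm_mul, norm_pow]
  exact mul_le_mul (hc n) le_rfl (by positivity) (by positivity)

lemma nsig_bound (m : ℕ) : ‖(m:ℂ) * sigmaC 5 m‖ ≤ (m:ℝ)^7 := by
  rw [norm_mul, Complex.norm_natCast]
  calc (m:ℝ) * ‖sigmaC 5 m‖ ≤ (m:ℝ) * (m:ℝ)^6 :=
        mul_le_mul_of_nonneg_left (sigmaC_norm_le 5 m) (by positivity)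
  _ = (m:ℝ)^7 := by ring

set_option maxHeartbeats 1000000 in
lemma hasDerivAt_qseries (K : ℕ) (c : ℕ → ℂ) (hc : ∀ m, ‖c m‖ ≤ (m:ℝ)^K)
    (τ : ℂ) (hτ : 0 < τ.im) :
    HasDerivAt (fun z => ∑' n : ℕ, c (n+1) * qq z^(n+1))
      (2 * (Real.pi:ℂ) * Complex.I * ∑' n : ℕ, ((n:ℂ)+1) * c (n+1) * qq τ^(n+1)) τ := by
  set ρ : ℝ := Real.exp (-(Real.pi * τ.im)) with hρdef
  have hρ1 : ρ < 1 := Real.exp_lt_one_iff.mpr (by nlinarith [Real.pi_pos])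
  have hρ0 : 0 < ρ := Real.exp_pos _
  set t : Set ℂ := {z : ℂ | τ.im / 2 < z.im} with ht
  have hopen : IsOpen t := isOpen_lt continuous_const Complex.continuous_im
  have hconn : IsPreconnected t := (convex_halfSpace_im_gt (τ.im / 2)).isPreconnected
  have hτt : τ ∈ t := by
    simp only [ht, Set.mem_setOf_eq]
    linarith
  have habs : ∀ z ∈ t, ‖qq z‖ ≤ ρ := by
    intro z hz
    rw [abs_qq_le, hρdef]
    apply Real.exp_le_exp.mpr
    simp only [ht, Set.mem_setOf_eq] at hz
    nlinarith [Real.pi_pos]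
  have hqd : ∀ z : ℂ, HasDerivAt qq (2*(Real.pi:ℂ)*Complex.I * qq z) z := by
    intro z
    have h1 : HasDerivAt (fun w : ℂ => 2*(Real.pi:ℂ)*Complex.I*w) (2*(Real.pi:ℂ)*Complex.I) z := by
      simpa using (hasDerivAt_id z).const_mul (2*(Real.pi:ℂ)*Complex.I)
    have h2 := h1.cexp
    have h3 : (2*(Real.pi:ℂ)*Complex.I * qq z)
        = Complex.exp (2*(Real.pi:ℂ)*Complex.I*z) * (2*(Real.pi:ℂ)*Complex.I) := by
      rw [qq]; ring
    rw [h3]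
    exact h2
  have hderiv : ∀ (n : ℕ), ∀ z ∈ t,
      HasDerivAt (fun z => c (n+1) * qq z^(n+1))
        (c (n+1) * (((n:ℂ)+1) * qq z^n * (2*(Real.pi:ℂ)*Complex.I * qq z))) z := by
    intro n z _
    have h2 := ((hqd z).fun_pow (n+1)).const_mul (c (n+1))
    refine h2.congr_deriv ?_
    push_cast
    ring
  set u : ℕ → ℝ := fun n => 2 * Real.pi * (((n:ℝ)+1)^(K+1) * ρ^(n+1)) with hu'
  have hu : Summable u := by
    have h1 : Summable (fun n : ℕ => (n:ℝ)^(K+1) * ρ^n) :=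
      summable_pow_mul_geometric_of_norm_lt_one (K+1)
        (by rwa [Real.norm_eq_abs, _root_.abs_of_nonneg hρ0.le])
    have h2 : Summable (fun n : ℕ => ((n+1:ℕ):ℝ)^(K+1) * ρ^(n+1)) :=
      (summable_nat_add_iff 1).mpr h1
    apply Summable.mul_left
    refine h2.congr (fun n => ?_)
    push_cast
    ring
  have hbound : ∀ (n : ℕ), ∀ z ∈ t,
      ‖c (n+1) * (((n:ℂ)+1) * qq z^n * (2*(Real.pi:ℂ)*Complex.I * qq z))‖ ≤ u n := by
    intro n z hz
    have h1 : ‖qq z‖ ≤ ρ := habs z hz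
    have h2 : ‖c (n+1)‖ ≤ ((n+1:ℕ):ℝ)^K := hc (n+1)
    have hnorm : ‖c (n+1) * (((n:ℂ)+1) * qq z^n * (2*(Real.pi:ℂ)*Complex.I * qq z))‖
        = ‖c (n+1)‖ * (((n:ℝ)+1) * ‖qq z‖^n * (2*Real.pi*‖qq z‖)) := by
      simp only [norm_mul, norm_pow, Complex.norm_natCast]
      have e1 : ‖(n:ℂ)+1‖ = (n:ℝ)+1 := by
        rw [show ((n:ℂ)+1) = ((n+1:ℕ):ℂ) by push_cast; ring, Complex.norm_natCast]
        push_cast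
        try ring
      have e2 : ‖(2:ℂ)*(Real.pi:ℂ)*Complex.I‖ = 2*Real.pi := by
        simp [norm_mul, Complex.norm_I, Complex.norm_real, Real.pi_nonneg,
          _root_.abs_of_nonneg Real.pi_nonneg]
      rw [e1]
      rw [show ‖(2:ℂ)‖ * ‖(Real.pi:ℂ)‖ * ‖Complex.I‖ = ‖(2:ℂ)*(Real.pi:ℂ)*Complex.I‖ by
        rw [norm_mul, norm_mul], e2]
      try ring
    rw [hnorm, hu']
    have hK : ‖c (n+1)‖ * (((n:ℝ)+1) * ‖qq z‖^n * (2*Real.pi*‖qq z‖))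
        ≤ ((n+1:ℕ):ℝ)^K * (((n:ℝ)+1) * ρ^n * (2*Real.pi*ρ)) := by
      gcongr <;> first | positivity | exact norm_nonneg _
    refine le_trans hK (le_of_eq ?_)
    push_cast
    ring
  have hsum0 : Summable (fun n => c (n+1) * qq τ^(n+1)) := by
    have := summable_coef K c hc (abs_qq_lt τ hτ)
    exact ((summable_nat_add_iff 1).mpr this.of_norm)
  have H := hasDerivAt_tsum_of_isPreconnected hu hopen hconn hderiv hbound hτt hsum0 hτt
  have hval : ∑' n : ℕ, c (n+1) * (((n:ℂ)+1) * qq τ^n * (2*(Real.pi:ℂ)*Complex.I * qq τ))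
      = 2 * (Real.pi:ℂ) * Complex.I * ∑' n : ℕ, ((n:ℂ)+1) * c (n+1) * qq τ^(n+1) := by
    rw [← tsum_mul_left]
    refine tsum_congr (fun n => ?_)
    ring
  rw [← hval]
  exact H
end analysis


end Aux

section MainProof
open Complex Finset

lemma tsum_shift (f : ℕ → ℂ) (hf : Summable f) (h0 : f 0 = 0) :
    ∑' n : ℕ, f (n + 1) = ∑' n : ℕ, f n := by
  rw [Summable.tsum_eq_zero_add hf, h0, zero_add]

theorem g3_deriv (τ : ℂ) (hτ : 0 < τ.im) :
    deriv g3 τ = (-Complex.I / (6 * (Real.pi : ℂ))) * (g2 τ ^ 2 - 18 * eta1 τ * g3 τ) := by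
  have hq : ‖qq τ‖ < 1 := abs_qq_lt τ hτ
  -- summabilities
  have hn1 : Summable (fun n => ‖sigmaC 1 n * qq τ ^ n‖) :=
    summable_coef 2 _ (sigmaC_norm_le 1) hq
  have hn3 : Summable (fun n => ‖sigmaC 3 n * qq τ ^ n‖) :=
    summable_coef 4 _ (sigmaC_norm_le 3) hq
  have hn5 : Summable (fun n => ‖sigmaC 5 n * qq τ ^ n‖) :=
    summable_coef 6 _ (sigmaC_norm_le 5) hq
  have hnW : Summable (fun n : ℕ => (n:ℂ) * sigmaC 5 n * qq τ ^ n) := by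
    have := summable_coef 7 (fun m => (m:ℂ) * sigmaC 5 m) nsig_bound hq
    exact this.of_norm
  -- abbreviations
  set X1 : ℂ := ∑' n : ℕ, sigmaC 1 n * qq τ ^ n with hX1
  set X3 : ℂ := ∑' n : ℕ, sigmaC 3 n * qq τ ^ n with hX3
  set X5 : ℂ := ∑' n : ℕ, sigmaC 5 n * qq τ ^ n with hX5
  set W : ℂ := ∑' n : ℕ, (n:ℂ) * sigmaC 5 n * qq τ ^ n with hW
  set Y33 : ℂ := ∑' n : ℕ, (∑ ij ∈ Finset.HasAntidiagonal.antidiagonal n, sigmaC 3 ij.1 * sigmaC 3 ij.2)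
    * qq τ ^ n with hY33
  set Y15 : ℂ := ∑' n : ℕ, (∑ ij ∈ Finset.HasAntidiagonal.antidiagonal n, sigmaC 1 ij.1 * sigmaC 5 ij.2)
    * qq τ ^ n with hY15
  -- shifts
  have hsh1 : ∑' n : ℕ, sigmaC 1 (n + 1) * qq τ ^ (n + 1) = X1 :=
    tsum_shift _ hn1.of_norm (by simp [sigmaC])
  have hsh3 : ∑' n : ℕ, sigmaC 3 (n + 1) * qq τ ^ (n + 1) = X3 :=
    tsum_shift _ hn3.of_norm (by simp [sigmaC])
  have hsh5 : ∑' n : ℕ, sigmaC 5 (n + 1) * qq τ ^ (n + 1) = X5 :=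
    tsum_shift _ hn5.of_norm (by simp [sigmaC])
  -- derivative
  have hS := hasDerivAt_qseries 6 (sigmaC 5) (sigmaC_norm_le 5) τ hτ
  have hT : ∑' n : ℕ, ((n:ℂ) + 1) * sigmaC 5 (n + 1) * qq τ ^ (n + 1) = W := by
    have he : ∀ n : ℕ, ((n:ℂ) + 1) * sigmaC 5 (n + 1) * qq τ ^ (n + 1)
        = (((n+1:ℕ)):ℂ) * sigmaC 5 (n + 1) * qq τ ^ (n + 1) := by
      intro n; push_cast; ring
    rw [tsum_congr he, tsum_shift (fun n => (n:ℂ) * sigmaC 5 n * qq τ ^ n) hnW (by simp)]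
  have hE6 : HasDerivAt E6
      (-(504 * (2 * (Real.pi:ℂ) * Complex.I
        * ∑' n : ℕ, ((n:ℂ) + 1) * sigmaC 5 (n + 1) * qq τ ^ (n + 1)))) τ :=
    (hS.const_mul (504:ℂ)).const_sub 1
  have hg3d : HasDerivAt g3 ((8 * (Real.pi:ℂ) ^ 6 / 27)
      * -(504 * (2 * (Real.pi:ℂ) * Complex.I
        * ∑' n : ℕ, ((n:ℂ) + 1) * sigmaC 5 (n + 1) * qq τ ^ (n + 1)))) τ :=
    hE6.const_mul _
  rw [hg3d.deriv, hT]
  -- values of E-functions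
  have hg2v : g2 τ = (4 * (Real.pi:ℂ) ^ 4 / 3) * (1 + 240 * X3) := by
    rw [g2, E4, hsh3]
  have hg3v : g3 τ = (8 * (Real.pi:ℂ) ^ 6 / 27) * (1 - 504 * X5) := by
    rw [g3, E6, hsh5]
  have heta1v : eta1 τ = ((Real.pi:ℂ) ^ 2 / 3) * (1 - 24 * X1) := by
    rw [eta1, E2, hsh1]
  rw [hg2v, hg3v, heta1v]
  -- Cauchy products
  have hprod33 : X3 * X3 = Y33 := by
    rw [hX3, hY33, tsum_mul_tsum_eq_tsum_sum_antidiagonal_of_summable_norm hn3 hn3]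
    refine tsum_congr (fun n => ?_)
    rw [Finset.sum_mul]
    refine Finset.sum_congr rfl (fun ij hij => ?_)
    rw [← Finset.HasAntidiagonal.mem_antidiagonal.mp hij]
    ring
  have hprod15 : X1 * X5 = Y15 := by
    rw [hX1, hX5, hY15, tsum_mul_tsum_eq_tsum_sum_antidiagonal_of_summable_norm hn1 hn5]
    refine tsum_congr (fun n => ?_)
    rw [Finset.sum_mul]
    refine Finset.sum_congr rfl (fun ij hij => ?_)
    rw [← Finset.HasAntidiagonal.mem_antidiagonal.mp hij]
    ring
  -- summability of product coefficient series
  have hsC33 : Summable (fun n : ℕ =>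
      (∑ ij ∈ Finset.HasAntidiagonal.antidiagonal n, sigmaC 3 ij.1 * sigmaC 3 ij.2) * qq τ ^ n) := by
    have h := summable_sum_mul_antidiagonal_of_summable_norm' hn3 hn3.of_norm hn3 hn3.of_norm
    refine h.congr (fun n => ?_)
    rw [Finset.sum_mul]
    refine Finset.sum_congr rfl (fun ij hij => ?_)
    rw [← Finset.HasAntidiagonal.mem_antidiagonal.mp hij]
    ring
  have hsC15 : Summable (fun n : ℕ =>
      (∑ ij ∈ Finset.HasAntidiagonal.antidiagonal n, sigmaC 1 ij.1 * sigmaC 5 ij.2) * qq τ ^ n) := by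
    have h := summable_sum_mul_antidiagonal_of_summable_norm' hn1 hn1.of_norm hn5 hn5.of_norm
    refine h.congr (fun n => ?_)
    rw [Finset.sum_mul]
    refine Finset.sum_congr rfl (fun ij hij => ?_)
    rw [← Finset.HasAntidiagonal.mem_antidiagonal.mp hij]
    ring
  -- the key tsum identity
  have hkeyt : 1008 * W = 24 * X1 + 480 * X3 + 504 * X5 + 57600 * Y33 - 12096 * Y15 := by
    have step1 : 1008 * W = ∑' n : ℕ, (24 * (sigmaC 1 n * qq τ ^ n)
        + 480 * (sigmaC 3 n * qq τ ^ n) + 504 * (sigmaC 5 n * qq τ ^ n)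
        + 57600 * ((∑ ij ∈ Finset.HasAntidiagonal.antidiagonal n, sigmaC 3 ij.1 * sigmaC 3 ij.2) * qq τ ^ n)
        - 12096 * ((∑ ij ∈ Finset.HasAntidiagonal.antidiagonal n, sigmaC 1 ij.1 * sigmaC 5 ij.2) * qq τ ^ n)) := by
      rw [hW, ← tsum_mul_left]
      refine tsum_congr (fun n => ?_)
      linear_combination (qq τ ^ n) * key_identity n
    rw [step1, Summable.tsum_sub (by
        exact (((hn1.of_norm.mul_left 24).add (hn3.of_norm.mul_left 480)).add
          (hn5.of_norm.mul_left 504)).add (hsC33.mul_left 57600))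
      (hsC15.mul_left 12096),
      Summable.tsum_add (((hn1.of_norm.mul_left 24).add (hn3.of_norm.mul_left 480)).add
          (hn5.of_norm.mul_left 504)) (hsC33.mul_left 57600),
      Summable.tsum_add ((hn1.of_norm.mul_left 24).add (hn3.of_norm.mul_left 480))
        (hn5.of_norm.mul_left 504),
      Summable.tsum_add (hn1.of_norm.mul_left 24) (hn3.of_norm.mul_left 480),
      tsum_mul_left, tsum_mul_left, tsum_mul_left, tsum_mul_left, tsum_mul_left,
      ← hX1, ← hX3, ← hX5, ← hY33, ← hY15]
  -- final algebra
  have hπ : (Real.pi : ℂ) ≠ 0 := Complex.ofReal_ne_zero.mpr Real.pi_ne_zero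
  have h6π : (6 : ℂ) * (Real.pi : ℂ) ≠ 0 := by
    intro h
    apply hπ
    have : (6:ℂ) ≠ 0 := by norm_num
    exact (mul_eq_zero.mp h).resolve_left this
  rw [div_mul_eq_mul_div (-Complex.I) (6 * (Real.pi:ℂ)), eq_div_iff h6π]
  linear_combination (16 * (Real.pi:ℂ)^8 * Complex.I / 9)
    * (57600 * hprod33 - 12096 * hprod15 - hkeyt)

end MainProof
end

section
/- For C ∈ ℝ and τ in the upper half-plane, f_{1−C}(1−τ̄) = −conj(f_C(τ)), where f_C(τ) := (C−τ)g₂(τ)² − 18(Cη₁(τ) − η₂(τ))g₃(τ). Consequently, f_C(τ) = 0 if and only if f_{1−C}(1−τ̄) = 0. -/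
open Complex Filter Asymptotics Set

lemma qq_refl (τ : ℂ) : qq (1 - (starRingEnd ℂ) τ) = (starRingEnd ℂ) (qq τ) := by
  unfold qq
  rw [← Complex.exp_conj]
  have h : (starRingEnd ℂ) (2 * (Real.pi : ℂ) * Complex.I * τ)
      = -(2 * (Real.pi : ℂ) * Complex.I * (starRingEnd ℂ) τ) := by
    simp only [map_mul, Complex.conj_I, Complex.conj_ofReal, map_ofNat]
    ring
  have h2 : 2 * (Real.pi : ℂ) * Complex.I * (1 - (starRingEnd ℂ) τ)
      = (starRingEnd ℂ) (2 * (Real.pi : ℂ) * Complex.I * τ) + 2 * (Real.pi : ℂ) * Complex.I := by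
    rw [h]; ring
  rw [h2, Complex.exp_add, Complex.exp_two_pi_mul_I, mul_one]

lemma sigmaC_conj (k n : ℕ) : (starRingEnd ℂ) (sigmaC k n) = sigmaC k n := by
  simp [sigmaC, map_sum]

lemma tsum_refl (k : ℕ) (τ : ℂ) :
    ∑' n : ℕ, sigmaC k (n + 1) * qq (1 - (starRingEnd ℂ) τ) ^ (n + 1)
      = (starRingEnd ℂ) (∑' n : ℕ, sigmaC k (n + 1) * qq τ ^ (n + 1)) := by
  have h : ∀ n : ℕ, sigmaC k (n + 1) * qq (1 - (starRingEnd ℂ) τ) ^ (n + 1)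
      = star (sigmaC k (n + 1) * qq τ ^ (n + 1)) := by
    intro n
    rw [← starRingEnd_apply, map_mul, map_pow, sigmaC_conj, qq_refl]
  simp_rw [h]
  rw [starRingEnd_apply]
  exact tsum_star.symm

lemma E2_refl (τ : ℂ) : E2 (1 - (starRingEnd ℂ) τ) = (starRingEnd ℂ) (E2 τ) := by
  unfold E2
  rw [tsum_refl]
  simp [map_sub, map_mul, map_ofNat]

lemma E4_refl (τ : ℂ) : E4 (1 - (starRingEnd ℂ) τ) = (starRingEnd ℂ) (E4 τ) := by
  unfold E4
  rw [tsum_refl]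
  simp [map_add, map_mul, map_ofNat]

lemma E6_refl (τ : ℂ) : E6 (1 - (starRingEnd ℂ) τ) = (starRingEnd ℂ) (E6 τ) := by
  unfold E6
  rw [tsum_refl]
  simp [map_sub, map_mul, map_ofNat]

lemma g2_refl (τ : ℂ) : g2 (1 - (starRingEnd ℂ) τ) = (starRingEnd ℂ) (g2 τ) := by
  unfold g2
  rw [E4_refl]
  simp [map_mul, map_div₀, Complex.conj_ofReal, map_ofNat]

lemma g3_refl (τ : ℂ) : g3 (1 - (starRingEnd ℂ) τ) = (starRingEnd ℂ) (g3 τ) := by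
  unfold g3
  rw [E6_refl]
  simp [map_mul, map_div₀, Complex.conj_ofReal, map_ofNat]

lemma eta1_refl (τ : ℂ) : eta1 (1 - (starRingEnd ℂ) τ) = (starRingEnd ℂ) (eta1 τ) := by
  unfold eta1
  rw [E2_refl]
  simp [map_mul, map_div₀, Complex.conj_ofReal, map_ofNat]

lemma eta2_refl (τ : ℂ) :
    eta2 (1 - (starRingEnd ℂ) τ) = (starRingEnd ℂ) (eta1 τ) - (starRingEnd ℂ) (eta2 τ) := by
  unfold eta2
  rw [eta1_refl]
  simp only [map_sub, map_mul, Complex.conj_I, Complex.conj_ofReal, map_ofNat]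
  ring

theorem f_C_reflection (C : ℝ) (τ : ℂ) (hτ : 0 < τ.im) :
    f (1 - (C : ℂ)) (1 - (starRingEnd ℂ) τ) = -(starRingEnd ℂ) (f (C : ℂ) τ) ∧
    (f (C : ℂ) τ = 0 ↔ f (1 - (C : ℂ)) (1 - (starRingEnd ℂ) τ) = 0) := by
  have key : f (1 - (C : ℂ)) (1 - (starRingEnd ℂ) τ) = -(starRingEnd ℂ) (f (C : ℂ) τ) := by
    unfold f
    rw [g2_refl, g3_refl, eta1_refl, eta2_refl]
    simp only [map_sub, map_mul, map_pow, map_ofNat, Complex.conj_ofReal]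
    ring
  refine ⟨key, ?_, ?_⟩
  · intro h; rw [key, h]; simp
  · intro h
    rw [key, neg_eq_zero] at h
    have := congrArg (starRingEnd ℂ) h
    simpa using this
end

section
/- For b ≥ 1/2, the function b ↦ η₁(1/2 + ib) is real-valued and strictly decreasing; equivalently, (d/db)η₁(1/2+ib) = (−1/(24π))(12η₁² − g₂)(1/2+ib) < 0. -/
open Complex Filter Asymptotics Set

section Aux


/-- divisor power sum as a natural number -/
def sig (k n : ℕ) : ℕ := ∑ d ∈ n.divisors, d ^ k

/-- quadruples (a,x,b,y) of positive integers with ax+by = n -/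
def QF (n : ℕ) : Finset (ℕ × ℕ × ℕ × ℕ) :=
  ((Finset.Icc 1 n ×ˢ Finset.Icc 1 n ×ˢ Finset.Icc 1 n ×ˢ Finset.Icc 1 n).filter
    fun p => p.1 * p.2.1 + p.2.2.1 * p.2.2.2 = n)

lemma mem_QF {n : ℕ} {p : ℕ × ℕ × ℕ × ℕ} :
    p ∈ QF n ↔ 1 ≤ p.1 ∧ 1 ≤ p.2.1 ∧ 1 ≤ p.2.2.1 ∧ 1 ≤ p.2.2.2 ∧
      p.1 * p.2.1 + p.2.2.1 * p.2.2.2 = n := by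
  obtain ⟨a, x, b, y⟩ := p
  simp only [QF, Finset.mem_filter, Finset.mem_product, Finset.mem_Icc]
  constructor
  · rintro ⟨⟨⟨h1, -⟩, ⟨h2, -⟩, ⟨h3, -⟩, h4, -⟩, h5⟩
    exact ⟨h1, h2, h3, h4, h5⟩
  · rintro ⟨h1, h2, h3, h4, h5⟩
    have hax : a * x ≤ n := by omega
    have hby : b * y ≤ n := by omega
    have ha : a ≤ n := le_trans (Nat.le_mul_of_pos_right a h2) hax
    have hx : x ≤ n := le_trans (Nat.le_mul_of_pos_left x h1) hax
    have hb : b ≤ n := le_trans (Nat.le_mul_of_pos_right b h4) hby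
    have hy : y ≤ n := le_trans (Nat.le_mul_of_pos_left y h3) hby
    exact ⟨⟨⟨h1, ha⟩, ⟨h2, hx⟩, ⟨h3, hb⟩, h4, hy⟩, h5⟩

/-- trichotomy split of a sum -/
lemma sum_trichotomy {α : Type*} [DecidableEq α] (s : Finset α) (f : α → ℚ) (g h : α → ℕ) :
    ∑ p ∈ s, f p =
      ∑ p ∈ s.filter (fun p => h p < g p), f p +
      ∑ p ∈ s.filter (fun p => g p = h p), f p +
      ∑ p ∈ s.filter (fun p => g p < h p), f p := by
  rw [← Finset.sum_filter_add_sum_filter_not s (fun p => h p < g p) f]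
  rw [← Finset.sum_filter_add_sum_filter_not (s.filter fun p => ¬ h p < g p)
    (fun p => g p = h p) f, Finset.filter_filter, Finset.filter_filter]
  rw [add_assoc]
  have e1 : (s.filter fun a => ¬ h a < g a ∧ g a = h a) = s.filter (fun p => g p = h p) := by
    apply Finset.filter_congr; intro p _; omega
  have e2 : (s.filter fun a => ¬ h a < g a ∧ ¬ g a = h a) = s.filter (fun p => g p < h p) := by
    apply Finset.filter_congr; intro p _; omega
  rw [e1, e2]

/-- swap (a,x,b,y) ↦ (b,y,a,x) on the a<b part -/
lemma sum_swap_ab (n : ℕ) (w : ℕ → ℕ → ℕ → ℕ → ℚ) :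
    ∑ p ∈ (QF n).filter (fun p => p.1 < p.2.2.1), w p.1 p.2.1 p.2.2.1 p.2.2.2 =
    ∑ p ∈ (QF n).filter (fun p => p.2.2.1 < p.1), w p.2.2.1 p.2.2.2 p.1 p.2.1 := by
  apply Finset.sum_nbij' (fun p => (p.2.2.1, p.2.2.2, p.1, p.2.1))
    (fun p => (p.2.2.1, p.2.2.2, p.1, p.2.1)) <;>
  · rintro ⟨a, x, b, y⟩ hp
    simp only [Finset.mem_filter, mem_QF] at hp ⊢
    try exact ⟨⟨hp.1.2.2.1, hp.1.2.2.2.1, hp.1.1, hp.1.2.1, by omega⟩, hp.2⟩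

/-- swap on the x<y part -/
lemma sum_swap_xy (n : ℕ) (w : ℕ → ℕ → ℕ → ℕ → ℚ) :
    ∑ p ∈ (QF n).filter (fun p => p.2.1 < p.2.2.2), w p.1 p.2.1 p.2.2.1 p.2.2.2 =
    ∑ p ∈ (QF n).filter (fun p => p.2.2.2 < p.2.1), w p.2.2.1 p.2.2.2 p.1 p.2.1 := by
  apply Finset.sum_nbij' (fun p => (p.2.2.1, p.2.2.2, p.1, p.2.1))
    (fun p => (p.2.2.1, p.2.2.2, p.1, p.2.1)) <;>
  · rintro ⟨a, x, b, y⟩ hp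
    simp only [Finset.mem_filter, mem_QF] at hp ⊢
    try exact ⟨⟨hp.1.2.2.1, hp.1.2.2.2.1, hp.1.1, hp.1.2.1, by omega⟩, hp.2⟩

/-- the key Euclidean bijection: {x>y} ≅ {a>b}, (a,x,b,y) ↦ (a+b,y,a,x−y),
with inverse (a,x,b,y) ↦ (b,x+y,a−b,x). -/
lemma sum_phi (n : ℕ) (w : ℕ → ℕ → ℕ → ℕ → ℚ) :
    ∑ p ∈ (QF n).filter (fun p => p.2.2.2 < p.2.1), w p.1 p.2.1 p.2.2.1 p.2.2.2 =
    ∑ p ∈ (QF n).filter (fun p => p.2.2.1 < p.1),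
      w p.2.2.1 (p.2.1 + p.2.2.2) (p.1 - p.2.2.1) p.2.1 := by
  apply Finset.sum_nbij' (fun p => (p.1 + p.2.2.1, p.2.2.2, p.1, p.2.1 - p.2.2.2))
    (fun p => (p.2.2.1, p.2.1 + p.2.2.2, p.1 - p.2.2.1, p.2.1))
  · rintro ⟨a, x, b, y⟩ hp
    simp only [Finset.mem_filter, mem_QF] at hp ⊢
    obtain ⟨⟨ha, hx, hb, hy, heq⟩, hlt⟩ := hp
    obtain ⟨u, hu⟩ : ∃ u, x = u + y := ⟨x - y, by omega⟩
    subst hu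
    refine ⟨⟨by omega, by omega, by omega, by omega, ?_⟩, by omega⟩
    simp only [Nat.add_sub_cancel]
    have : (a + b) * y + a * u = a * (u + y) + b * y := by ring
    omega
  · rintro ⟨a, x, b, y⟩ hp
    simp only [Finset.mem_filter, mem_QF] at hp ⊢
    obtain ⟨⟨ha, hx, hb, hy, heq⟩, hlt⟩ := hp
    obtain ⟨u, hu⟩ : ∃ u, a = u + b := ⟨a - b, by omega⟩
    subst hu
    refine ⟨⟨by omega, by omega, by omega, by omega, ?_⟩, by omega⟩
    simp only [Nat.add_sub_cancel]
    have : b * (x + y) + u * x = (u + b) * x + b * y := by ring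
    omega
  · rintro ⟨a, x, b, y⟩ hp
    simp only [Finset.mem_filter, mem_QF] at hp
    obtain ⟨⟨ha, hx, hb, hy, heq⟩, hlt⟩ := hp
    simp only [Prod.mk.injEq]
    refine ⟨?_, ?_, ?_, ?_⟩ <;> first | trivial | omega
  · rintro ⟨a, x, b, y⟩ hp
    simp only [Finset.mem_filter, mem_QF] at hp
    obtain ⟨⟨ha, hx, hb, hy, heq⟩, hlt⟩ := hp
    simp only [Prod.mk.injEq]
    refine ⟨?_, ?_, ?_, ?_⟩ <;> first | trivial | omega
  · rintro ⟨a, x, b, y⟩ hp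
    simp only [Finset.mem_filter, mem_QF] at hp
    obtain ⟨⟨ha, hx, hb, hy, heq⟩, hlt⟩ := hp
    simp only
    have h2 : y + (x - y) = x := by omega
    have h3 : a + b - a = b := by omega
    rw [h2, h3]

/-- a=b diagonal -/
lemma sum_diag_ab (n : ℕ) (hn : n ≠ 0) (w : ℕ → ℕ → ℚ) :
    ∑ p ∈ (QF n).filter (fun p => p.1 = p.2.2.1), w p.2.1 p.2.2.2 =
    ∑ d ∈ n.divisorsAntidiagonal, ∑ x ∈ Finset.Ico 1 d.2, w x (d.2 - x) := by
  rw [Finset.sum_sigma']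
  apply Finset.sum_nbij' (fun p => (⟨(p.1, p.2.1 + p.2.2.2), p.2.1⟩ :
      (_ : ℕ × ℕ) × ℕ))
    (fun q => (q.1.1, q.2, q.1.1, q.1.2 - q.2))
  · rintro ⟨a, x, b, y⟩ hp
    simp only [Finset.mem_filter, mem_QF] at hp
    obtain ⟨⟨ha, hx, hb, hy, heq⟩, hd⟩ := hp
    subst hd
    simp only [Finset.mem_sigma, Nat.mem_divisorsAntidiagonal, Finset.mem_Ico]
    have h1 : a * (x + y) = a * x + a * y := by ring
    exact ⟨⟨by omega, hn⟩, by omega, by omega⟩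
  · rintro ⟨⟨d, m⟩, x⟩ hq
    simp only [Finset.mem_sigma, Nat.mem_divisorsAntidiagonal, Finset.mem_Ico] at hq
    obtain ⟨⟨hdm, -⟩, hx1, hxm⟩ := hq
    simp only [Finset.mem_filter, mem_QF]
    have hd : 0 < d := by
      rcases Nat.eq_zero_or_pos d with rfl | h
      · simp at hdm; omega
      · exact h
    have h1 : d * x + d * (m - x) = d * m := by
      rw [← Nat.mul_add]; congr 1; omega
    exact ⟨⟨hd, hx1, hd, by omega, by omega⟩, trivial⟩
  · rintro ⟨a, x, b, y⟩ hp
    simp only [Finset.mem_filter, mem_QF] at hp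
    obtain ⟨-, hab⟩ := hp
    subst hab
    simp [Nat.add_sub_cancel_left]
  · rintro ⟨⟨d, m⟩, x⟩ hq
    simp only [Finset.mem_sigma, Nat.mem_divisorsAntidiagonal, Finset.mem_Ico] at hq
    obtain ⟨-, -, hxm⟩ := hq
    simp only
    rw [show x + (m - x) = m from by omega]
  · rintro ⟨a, x, b, y⟩ hp
    simp only
    congr 1
    omega

/-- x=y diagonal -/
lemma sum_diag_xy (n : ℕ) (hn : n ≠ 0) (w : ℕ → ℚ) :
    ∑ p ∈ (QF n).filter (fun p => p.2.1 = p.2.2.2), w p.2.1 =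
    ∑ d ∈ n.divisorsAntidiagonal, ((d.1 : ℚ) - 1) * w d.2 := by
  have key : ∀ d ∈ n.divisorsAntidiagonal,
      ((d.1 : ℚ) - 1) * w d.2 = ∑ a ∈ Finset.Ico 1 d.1, w d.2 := by
    intro ⟨m, x⟩ hd
    simp only [Nat.mem_divisorsAntidiagonal] at hd
    have hm : 0 < m := by
      rcases Nat.eq_zero_or_pos m with rfl | h
      · simp at hd; omega
      · exact h
    rw [Finset.sum_const, Nat.card_Ico, nsmul_eq_mul]
    congr 1
    push_cast [Nat.cast_sub hm]
    ring
  rw [Finset.sum_congr rfl key, Finset.sum_sigma']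
  apply Finset.sum_nbij' (fun p => (⟨(p.1 + p.2.2.1, p.2.1), p.1⟩ : (_ : ℕ × ℕ) × ℕ))
    (fun q => (q.2, q.1.2, q.1.1 - q.2, q.1.2))
  · rintro ⟨a, x, b, y⟩ hp
    simp only [Finset.mem_filter, mem_QF] at hp
    obtain ⟨⟨ha, hx, hb, hy, heq⟩, hd⟩ := hp
    subst hd
    simp only [Finset.mem_sigma, Nat.mem_divisorsAntidiagonal, Finset.mem_Ico]
    have h1 : (a + b) * x = a * x + b * x := by ring
    exact ⟨⟨by omega, hn⟩, by omega, by omega⟩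
  · rintro ⟨⟨m, x⟩, a⟩ hq
    simp only [Finset.mem_sigma, Nat.mem_divisorsAntidiagonal, Finset.mem_Ico] at hq
    obtain ⟨⟨hmx, -⟩, ha1, ham⟩ := hq
    simp only [Finset.mem_filter, mem_QF]
    have hx : 0 < x := by
      rcases Nat.eq_zero_or_pos x with rfl | h
      · simp at hmx; omega
      · exact h
    have h1 : a * x + (m - a) * x = m * x := by
      rw [← Nat.add_mul]; congr 1; omega
    exact ⟨⟨ha1, hx, by omega, hx, by omega⟩, trivial⟩
  · rintro ⟨a, x, b, y⟩ hp
    simp only [Finset.mem_filter, mem_QF] at hp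
    obtain ⟨-, hxy⟩ := hp
    subst hxy
    simp [Nat.add_sub_cancel_left]
  · rintro ⟨⟨m, x⟩, a⟩ hq
    simp only [Finset.mem_sigma, Nat.mem_divisorsAntidiagonal, Finset.mem_Ico] at hq
    obtain ⟨-, -, ham⟩ := hq
    simp only
    rw [show a + (m - a) = m from by omega]
  · rintro ⟨a, x, b, y⟩ hp
    rfl

lemma sum_range_cast (m : ℕ) : ∑ x ∈ Finset.range m, (x : ℚ) = m * (m - 1) / 2 := by
  induction m with
  | zero => simp
  | succ k ih => rw [Finset.sum_range_succ, ih]; push_cast; ring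

lemma sum_range_sq_cast (m : ℕ) : ∑ x ∈ Finset.range m, (x : ℚ) ^ 2 = m * (m - 1) * (2 * m - 1) / 6 := by
  induction m with
  | zero => simp
  | succ k ih => rw [Finset.sum_range_succ, ih]; push_cast; ring

/-- ∑_{x=1}^{m-1} x(m-x) = (m³-m)/6 -/
lemma sumIco_xy (m : ℕ) :
    ∑ x ∈ Finset.Ico 1 m, (x : ℚ) * ((m - x : ℕ) : ℚ) = ((m : ℚ) ^ 3 - m) / 6 := by
  have hsub : Finset.Ico 1 m ⊆ Finset.range m := by
    intro x hx; rw [Finset.mem_Ico] at hx; rw [Finset.mem_range]; omega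
  have hvan : ∀ x ∈ Finset.range m, x ∉ Finset.Ico 1 m → (x : ℚ) * ((m - x : ℕ) : ℚ) = 0 := by
    intro x hx hnx
    rw [Finset.mem_range] at hx; rw [Finset.mem_Ico] at hnx
    have : x = 0 := by omega
    subst this; simp
  rw [Finset.sum_subset hsub hvan]
  have hcg : ∀ x ∈ Finset.range m, (x : ℚ) * ((m - x : ℕ) : ℚ) = (m : ℚ) * x - (x : ℚ) ^ 2 := by
    intro x hx; rw [Finset.mem_range] at hx
    rw [Nat.cast_sub (by omega)]; ring
  rw [Finset.sum_congr rfl hcg, Finset.sum_sub_distrib, ← Finset.mul_sum,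
    sum_range_cast, sum_range_sq_cast]
  ring

/-- ∑_{x=1}^{m-1} (x² + (m-x)²) = (2m³-3m²+m)/3 for m ≥ 1 -/
lemma sumIco_sq (m : ℕ) (hm : 1 ≤ m) :
    ∑ x ∈ Finset.Ico 1 m, ((x : ℚ) ^ 2 + ((m - x : ℕ) : ℚ) ^ 2) =
      (2 * (m : ℚ) ^ 3 - 3 * (m : ℚ) ^ 2 + m) / 3 := by
  have key : ∑ x ∈ Finset.range m, ((x : ℚ) ^ 2 + ((m - x : ℕ) : ℚ) ^ 2) =
      (2 * (m : ℚ) ^ 3 - 3 * (m : ℚ) ^ 2 + m) / 3 + (m : ℚ) ^ 2 := by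
    have hcg : ∀ x ∈ Finset.range m, (x : ℚ) ^ 2 + ((m - x : ℕ) : ℚ) ^ 2 =
        2 * (x : ℚ) ^ 2 - 2 * (m : ℚ) * x + (m : ℚ) ^ 2 := by
      intro x hx; rw [Finset.mem_range] at hx
      rw [Nat.cast_sub (by omega)]; ring
    rw [Finset.sum_congr rfl hcg]
    rw [Finset.sum_add_distrib, Finset.sum_sub_distrib, ← Finset.mul_sum, ← Finset.mul_sum,
      sum_range_cast, sum_range_sq_cast, Finset.sum_const, Finset.card_range, nsmul_eq_mul]
    ring
  have split : ∑ x ∈ Finset.range m, ((x : ℚ) ^ 2 + ((m - x : ℕ) : ℚ) ^ 2) =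
      ((0 : ℕ) : ℚ) ^ 2 + ((m - 0 : ℕ) : ℚ) ^ 2 +
        ∑ x ∈ Finset.Ico 1 m, ((x : ℚ) ^ 2 + ((m - x : ℕ) : ℚ) ^ 2) := by
    rw [Finset.range_eq_Ico, Finset.sum_eq_sum_Ico_succ_bot (by omega : 0 < m)]
  rw [key] at split
  simp only [Nat.sub_zero, Nat.cast_zero] at split
  linarith [split]

/-- ∑ over divisorsAntidiagonal of (snd)^k equals sig k n, in ℚ -/
lemma DA_sum_pow (k n : ℕ) :
    ∑ i ∈ n.divisorsAntidiagonal, ((i.2 : ℚ)) ^ k = (sig k n : ℚ) := by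
  rw [Nat.sum_divisorsAntidiagonal' (f := fun _ e => ((e : ℚ)) ^ k)]
  rw [sig, Nat.cast_sum]
  push_cast
  rfl

/-- σ₁ as a sum over the divisors Finset.antidiagonal -/
lemma sig_one_DA (k : ℕ) : (sig 1 k : ℚ) = ∑ i ∈ k.divisorsAntidiagonal, (i.2 : ℚ) := by
  rw [← DA_sum_pow 1 k]
  simp

/-- the convolution ∑_{i+j=n} σ(i)σ(j) as a sum over quadruples -/
lemma W_eq (n : ℕ) :
    ∑ p ∈ Finset.HasAntidiagonal.antidiagonal n, (sig 1 p.1 : ℚ) * (sig 1 p.2 : ℚ) =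
    ∑ p ∈ QF n, ((p.2.1 : ℚ) * (p.2.2.2 : ℚ)) := by
  have step1 : ∀ p ∈ Finset.HasAntidiagonal.antidiagonal n, (sig 1 p.1 : ℚ) * (sig 1 p.2 : ℚ) =
      ∑ q ∈ p.1.divisorsAntidiagonal ×ˢ p.2.divisorsAntidiagonal,
        ((q.1.2 : ℚ) * (q.2.2 : ℚ)) := by
    intro p _
    rw [sig_one_DA, sig_one_DA, Finset.sum_mul_sum, ← Finset.sum_product']
  rw [Finset.sum_congr rfl step1, Finset.sum_sigma']
  apply Finset.sum_nbij'
    (fun q => (q.2.1.1, q.2.1.2, q.2.2.1, q.2.2.2))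
    (fun p => (⟨(p.1 * p.2.1, p.2.2.1 * p.2.2.2), ((p.1, p.2.1), (p.2.2.1, p.2.2.2))⟩ :
      (_ : ℕ × ℕ) × (ℕ × ℕ) × ℕ × ℕ))
  · rintro ⟨⟨i, j⟩, ⟨a, x⟩, b, y⟩ hq
    simp only [Finset.mem_sigma, Finset.HasAntidiagonal.mem_antidiagonal, Finset.mem_product,
      Nat.mem_divisorsAntidiagonal] at hq
    obtain ⟨hij, ⟨hax, hi0⟩, hby, hj0⟩ := hq
    rw [mem_QF]
    have ha : a ≠ 0 := by rintro rfl; simp at hax; omega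
    have hx : x ≠ 0 := by rintro rfl; rw [Nat.mul_zero] at hax; omega
    have hb : b ≠ 0 := by rintro rfl; simp at hby; omega
    have hy : y ≠ 0 := by rintro rfl; rw [Nat.mul_zero] at hby; omega
    subst hax; subst hby
    dsimp only
    exact ⟨by omega, by omega, by omega, by omega, hij⟩
  · rintro ⟨a, x, b, y⟩ hp
    rw [mem_QF] at hp
    obtain ⟨ha, hx, hb, hy, heq⟩ := hp
    simp only [Finset.mem_sigma, Finset.mem_antidiagonal, Finset.mem_product,
      Nat.mem_divisorsAntidiagonal]
    have h1 : a * x ≠ 0 := by positivity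
    have h2 : b * y ≠ 0 := by positivity
    exact ⟨by simpa using heq, ⟨trivial, h1⟩, trivial, h2⟩
  · rintro ⟨⟨i, j⟩, ⟨a, x⟩, b, y⟩ hq
    simp only [Finset.mem_sigma, Finset.mem_antidiagonal, Finset.mem_product,
      Nat.mem_divisorsAntidiagonal] at hq
    obtain ⟨hij, ⟨hax, hi0⟩, hby, hj0⟩ := hq
    simp only
    subst hax; subst hby
    rfl
  · rintro ⟨a, x, b, y⟩ hp
    rfl
  · rintro ⟨⟨i, j⟩, ⟨a, x⟩, b, y⟩ hq
    rfl

/-- Besge's identity: 12·∑_{i+j=n} σ(i)σ(j) + 6nσ(n) = 5σ₃(n) + σ(n). -/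
theorem besge (n : ℕ) :
    12 * (∑ p ∈ Finset.HasAntidiagonal.antidiagonal n, (sig 1 p.1 : ℚ) * (sig 1 p.2 : ℚ)) +
      6 * n * (sig 1 n : ℚ) = 5 * (sig 3 n : ℚ) + (sig 1 n : ℚ) := by
  rcases Nat.eq_zero_or_pos n with rfl | hn
  · simp [sig]
  have hn0 : n ≠ 0 := by omega
  -- divisor sums over the Finset.antidiagonal
  have DA1 : ∑ i ∈ n.divisorsAntidiagonal, (i.2 : ℚ) = (sig 1 n : ℚ) := by
    have := DA_sum_pow 1 n; simpa using this
  have DA2 : ∑ i ∈ n.divisorsAntidiagonal, (i.2 : ℚ) ^ 2 = (sig 2 n : ℚ) := DA_sum_pow 2 n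
  have DA3 : ∑ i ∈ n.divisorsAntidiagonal, (i.2 : ℚ) ^ 3 = (sig 3 n : ℚ) := DA_sum_pow 3 n
  have DAmul : ∀ i ∈ n.divisorsAntidiagonal, (i.1 : ℚ) * (i.2 : ℚ) = (n : ℚ) := by
    intro i hi
    rw [Nat.mem_divisorsAntidiagonal] at hi
    exact_mod_cast congrArg (Nat.cast : ℕ → ℚ) hi.1
  have DApos : ∀ i ∈ n.divisorsAntidiagonal, 1 ≤ i.2 := by
    intro i hi
    rw [Nat.mem_divisorsAntidiagonal] at hi
    rcases Nat.eq_zero_or_pos i.2 with h | h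
    · exfalso; rw [h, Nat.mul_zero] at hi; omega
    · exact h
  set s1 := (sig 1 n : ℚ)
  set s2 := (sig 2 n : ℚ)
  set s3 := (sig 3 n : ℚ)
  set A := (QF n).filter (fun p => p.2.2.1 < p.1) with hA
  set X := ∑ p ∈ A, ((p.2.1 : ℚ)) ^ 2 with hX
  set Y := ∑ p ∈ A, ((p.2.2.2 : ℚ)) ^ 2 with hY
  set Z := ∑ p ∈ A, ((p.2.1 : ℚ) * (p.2.2.2 : ℚ)) with hZ
  set T := ∑ p ∈ QF n, ((p.2.1 : ℚ) * (p.2.2.2 : ℚ)) with hT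
  set G := ∑ p ∈ QF n, ((p.2.1 : ℚ) ^ 2 + (p.2.2.2 : ℚ) ^ 2) with hG
  -- diagonal values
  have dab_xy : ∑ p ∈ (QF n).filter (fun p => p.1 = p.2.2.1), ((p.2.1 : ℚ) * (p.2.2.2 : ℚ)) =
      (s3 - s1) / 6 := by
    have e : ∑ p ∈ (QF n).filter (fun p => p.1 = p.2.2.1), ((p.2.1 : ℚ) * (p.2.2.2 : ℚ)) =
        ∑ d ∈ n.divisorsAntidiagonal, ∑ x ∈ Finset.Ico 1 d.2, ((x : ℚ) * ((d.2 - x : ℕ) : ℚ)) :=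
      sum_diag_ab n hn0 (fun x y => (x : ℚ) * (y : ℚ))
    rw [e, Finset.sum_congr rfl (fun d _ => sumIco_xy d.2), ← Finset.sum_div,
      Finset.sum_sub_distrib, DA3, DA1]
  have dab_g : ∑ p ∈ (QF n).filter (fun p => p.1 = p.2.2.1),
      ((p.2.1 : ℚ) ^ 2 + (p.2.2.2 : ℚ) ^ 2) = (2 * s3 - 3 * s2 + s1) / 3 := by
    have e : ∑ p ∈ (QF n).filter (fun p => p.1 = p.2.2.1),
        ((p.2.1 : ℚ) ^ 2 + (p.2.2.2 : ℚ) ^ 2) =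
        ∑ d ∈ n.divisorsAntidiagonal, ∑ x ∈ Finset.Ico 1 d.2,
          ((x : ℚ) ^ 2 + ((d.2 - x : ℕ) : ℚ) ^ 2) :=
      sum_diag_ab n hn0 (fun x y => (x : ℚ) ^ 2 + (y : ℚ) ^ 2)
    rw [e, Finset.sum_congr rfl (fun d hd => sumIco_sq d.2 (DApos d hd))]
    have : ∀ d ∈ n.divisorsAntidiagonal,
        (2 * ((d.2 : ℚ)) ^ 3 - 3 * ((d.2 : ℚ)) ^ 2 + (d.2 : ℚ)) / 3 =
        (2 * ((d.2 : ℚ)) ^ 3 - 3 * ((d.2 : ℚ)) ^ 2 + (d.2 : ℚ)) * (1 / 3) := by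
      intro d _; ring
    rw [Finset.sum_congr rfl this, ← Finset.sum_mul, Finset.sum_add_distrib,
      Finset.sum_sub_distrib, ← Finset.mul_sum, ← Finset.mul_sum, DA3, DA2, DA1]
    ring
  have dxy_xy : ∑ p ∈ (QF n).filter (fun p => p.2.1 = p.2.2.2),
      ((p.2.1 : ℚ) * (p.2.2.2 : ℚ)) = (n : ℚ) * s1 - s2 := by
    have e0 : ∑ p ∈ (QF n).filter (fun p => p.2.1 = p.2.2.2),
        ((p.2.1 : ℚ) * (p.2.2.2 : ℚ)) =
        ∑ p ∈ (QF n).filter (fun p => p.2.1 = p.2.2.2), ((p.2.1 : ℚ)) ^ 2 := by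
      apply Finset.sum_congr rfl
      intro p hp
      rw [Finset.mem_filter] at hp
      rw [← hp.2]; ring
    have e : ∑ p ∈ (QF n).filter (fun p => p.2.1 = p.2.2.2), ((p.2.1 : ℚ)) ^ 2 =
        ∑ d ∈ n.divisorsAntidiagonal, ((d.1 : ℚ) - 1) * ((d.2 : ℚ)) ^ 2 :=
      sum_diag_xy n hn0 (fun x => (x : ℚ) ^ 2)
    rw [e0, e]
    have e2 : ∀ d ∈ n.divisorsAntidiagonal,
        ((d.1 : ℚ) - 1) * ((d.2 : ℚ)) ^ 2 = (n : ℚ) * (d.2 : ℚ) - ((d.2 : ℚ)) ^ 2 := by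
      intro d hd
      have := DAmul d hd
      nlinarith [this]
    rw [Finset.sum_congr rfl e2, Finset.sum_sub_distrib, ← Finset.mul_sum, DA1, DA2]
  have dxy_g : ∑ p ∈ (QF n).filter (fun p => p.2.1 = p.2.2.2),
      ((p.2.1 : ℚ) ^ 2 + (p.2.2.2 : ℚ) ^ 2) = 2 * ((n : ℚ) * s1 - s2) := by
    have e0 : ∑ p ∈ (QF n).filter (fun p => p.2.1 = p.2.2.2),
        ((p.2.1 : ℚ) ^ 2 + (p.2.2.2 : ℚ) ^ 2) =
        ∑ p ∈ (QF n).filter (fun p => p.2.1 = p.2.2.2), (2 * ((p.2.1 : ℚ)) ^ 2) := by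
      apply Finset.sum_congr rfl
      intro p hp
      rw [Finset.mem_filter] at hp
      rw [← hp.2]; ring
    have e : ∑ p ∈ (QF n).filter (fun p => p.2.1 = p.2.2.2), (2 * ((p.2.1 : ℚ)) ^ 2) =
        ∑ d ∈ n.divisorsAntidiagonal, ((d.1 : ℚ) - 1) * (2 * ((d.2 : ℚ)) ^ 2) :=
      sum_diag_xy n hn0 (fun x => 2 * (x : ℚ) ^ 2)
    rw [e0, e]
    have e2 : ∀ d ∈ n.divisorsAntidiagonal,
        ((d.1 : ℚ) - 1) * (2 * ((d.2 : ℚ)) ^ 2) =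
          (2 * (n : ℚ)) * (d.2 : ℚ) - 2 * ((d.2 : ℚ)) ^ 2 := by
      intro d hd
      have := DAmul d hd
      nlinarith [this]
    rw [Finset.sum_congr rfl e2, Finset.sum_sub_distrib, ← Finset.mul_sum, ← Finset.mul_sum,
      DA1, DA2]
    ring
  -- swap symmetry
  have swap_xy_T : ∑ p ∈ (QF n).filter (fun p => p.1 < p.2.2.1),
      ((p.2.1 : ℚ) * (p.2.2.2 : ℚ)) = Z := by
    have e : ∑ p ∈ (QF n).filter (fun p => p.1 < p.2.2.1), ((p.2.1 : ℚ) * (p.2.2.2 : ℚ)) =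
        ∑ p ∈ (QF n).filter (fun p => p.2.2.1 < p.1), ((p.2.2.2 : ℚ) * (p.2.1 : ℚ)) :=
      sum_swap_ab n (fun a x b y => (x : ℚ) * (y : ℚ))
    rw [e, hZ]
    apply Finset.sum_congr rfl
    intro p _; ring
  have swap_xy_B : ∑ p ∈ (QF n).filter (fun p => p.2.1 < p.2.2.2),
      ((p.2.1 : ℚ) * (p.2.2.2 : ℚ)) =
      ∑ p ∈ (QF n).filter (fun p => p.2.2.2 < p.2.1), ((p.2.1 : ℚ) * (p.2.2.2 : ℚ)) := by
    have e : ∑ p ∈ (QF n).filter (fun p => p.2.1 < p.2.2.2), ((p.2.1 : ℚ) * (p.2.2.2 : ℚ)) =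
        ∑ p ∈ (QF n).filter (fun p => p.2.2.2 < p.2.1), ((p.2.2.2 : ℚ) * (p.2.1 : ℚ)) :=
      sum_swap_xy n (fun a x b y => (x : ℚ) * (y : ℚ))
    rw [e]
    apply Finset.sum_congr rfl
    intro p _; ring
  have swap_g_A : ∑ p ∈ (QF n).filter (fun p => p.1 < p.2.2.1),
      ((p.2.1 : ℚ) ^ 2 + (p.2.2.2 : ℚ) ^ 2) = X + Y := by
    have e : ∑ p ∈ (QF n).filter (fun p => p.1 < p.2.2.1),
        ((p.2.1 : ℚ) ^ 2 + (p.2.2.2 : ℚ) ^ 2) =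
        ∑ p ∈ (QF n).filter (fun p => p.2.2.1 < p.1),
          ((p.2.2.2 : ℚ) ^ 2 + (p.2.1 : ℚ) ^ 2) :=
      sum_swap_ab n (fun a x b y => (x : ℚ) ^ 2 + (y : ℚ) ^ 2)
    rw [e, hX, hY, ← Finset.sum_add_distrib]
    apply Finset.sum_congr rfl
    intro p _; ring
  have swap_g_B : ∑ p ∈ (QF n).filter (fun p => p.2.1 < p.2.2.2),
      ((p.2.1 : ℚ) ^ 2 + (p.2.2.2 : ℚ) ^ 2) =
      ∑ p ∈ (QF n).filter (fun p => p.2.2.2 < p.2.1),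
        ((p.2.1 : ℚ) ^ 2 + (p.2.2.2 : ℚ) ^ 2) := by
    have e : ∑ p ∈ (QF n).filter (fun p => p.2.1 < p.2.2.2),
        ((p.2.1 : ℚ) ^ 2 + (p.2.2.2 : ℚ) ^ 2) =
        ∑ p ∈ (QF n).filter (fun p => p.2.2.2 < p.2.1),
          ((p.2.2.2 : ℚ) ^ 2 + (p.2.1 : ℚ) ^ 2) :=
      sum_swap_xy n (fun a x b y => (x : ℚ) ^ 2 + (y : ℚ) ^ 2)
    rw [e]
    apply Finset.sum_congr rfl
    intro p _; ring
  -- the Euclidean bijection values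
  have phi_xy : ∑ p ∈ (QF n).filter (fun p => p.2.2.2 < p.2.1),
      ((p.2.1 : ℚ) * (p.2.2.2 : ℚ)) = X + Z := by
    have e : ∑ p ∈ (QF n).filter (fun p => p.2.2.2 < p.2.1), ((p.2.1 : ℚ) * (p.2.2.2 : ℚ)) =
        ∑ p ∈ (QF n).filter (fun p => p.2.2.1 < p.1),
          (((p.2.1 + p.2.2.2 : ℕ) : ℚ) * (p.2.1 : ℚ)) :=
      sum_phi n (fun a x b y => (x : ℚ) * (y : ℚ))
    rw [e, hX, hZ, ← Finset.sum_add_distrib]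
    apply Finset.sum_congr rfl
    intro p _
    push_cast
    ring
  have phi_g : ∑ p ∈ (QF n).filter (fun p => p.2.2.2 < p.2.1),
      ((p.2.1 : ℚ) ^ 2 + (p.2.2.2 : ℚ) ^ 2) = 2 * X + 2 * Z + Y := by
    have e : ∑ p ∈ (QF n).filter (fun p => p.2.2.2 < p.2.1),
        ((p.2.1 : ℚ) ^ 2 + (p.2.2.2 : ℚ) ^ 2) =
        ∑ p ∈ (QF n).filter (fun p => p.2.2.1 < p.1),
          (((p.2.1 + p.2.2.2 : ℕ) : ℚ) ^ 2 + (p.2.1 : ℚ) ^ 2) :=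
      sum_phi n (fun a x b y => (x : ℚ) ^ 2 + (y : ℚ) ^ 2)
    have e2 : ∑ p ∈ (QF n).filter (fun p => p.2.2.1 < p.1),
        (((p.2.1 + p.2.2.2 : ℕ) : ℚ) ^ 2 + (p.2.1 : ℚ) ^ 2) =
        ∑ p ∈ A, (2 * (p.2.1 : ℚ) ^ 2 + 2 * ((p.2.1 : ℚ) * (p.2.2.2 : ℚ)) +
          (p.2.2.2 : ℚ) ^ 2) := by
      apply Finset.sum_congr rfl
      intro p _
      push_cast
      ring
    rw [e, e2]
    rw [Finset.sum_add_distrib, Finset.sum_add_distrib, ← Finset.mul_sum, ← Finset.mul_sum,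
      hX, hY, hZ]
  -- trichotomy equations
  have E1 : T = Z + (s3 - s1) / 6 + Z := by
    rw [hT, sum_trichotomy (QF n) _ (fun p => p.1) (fun p => p.2.2.1), dab_xy, swap_xy_T, hZ, hA]
  have E2 : T = (X + Z) + ((n : ℚ) * s1 - s2) + (X + Z) := by
    rw [hT, sum_trichotomy (QF n) _ (fun p => p.2.1) (fun p => p.2.2.2), dxy_xy, swap_xy_B,
      phi_xy]
  have E3 : G = (X + Y) + (2 * s3 - 3 * s2 + s1) / 3 + (X + Y) := by
    have sumA : ∑ p ∈ A, ((p.2.1 : ℚ) ^ 2 + (p.2.2.2 : ℚ) ^ 2) = X + Y := by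
      rw [hX, hY, Finset.sum_add_distrib]
    rw [hG, sum_trichotomy (QF n) _ (fun p => p.1) (fun p => p.2.2.1), dab_g, swap_g_A, ← hA,
      sumA]
  have E4 : G = (2 * X + 2 * Z + Y) + 2 * ((n : ℚ) * s1 - s2) + (2 * X + 2 * Z + Y) := by
    rw [hG, sum_trichotomy (QF n) _ (fun p => p.2.1) (fun p => p.2.2.2), dxy_g, swap_g_B, phi_g]
  have hW : ∑ p ∈ Finset.HasAntidiagonal.antidiagonal n, (sig 1 p.1 : ℚ) * (sig 1 p.2 : ℚ) = T := W_eq n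
  rw [hW]
  linarith [E1, E2, E3, E4]


lemma sigmaC_eq_sig (k n : ℕ) : sigmaC k n = ((sig k n : ℕ) : ℂ) := by
  rw [sigmaC, sig]
  push_cast
  rfl

lemma sig_le (k n : ℕ) : sig k n ≤ n ^ (k + 1) := by
  rcases Nat.eq_zero_or_pos n with rfl | hn
  · simp [sig]
  calc sig k n ≤ (n.divisors).card • n ^ k := by
        apply Finset.sum_le_card_nsmul
        intro d hd
        exact Nat.pow_le_pow_left (Nat.divisor_le hd) k
    _ ≤ n * n ^ k := by
        rw [smul_eq_mul]
        apply Nat.mul_le_mul_right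
        calc (n.divisors).card ≤ (Finset.Ico 1 (n + 1)).card :=
              Finset.card_le_card (fun d hd => by
                rw [Finset.mem_Ico]
                have h1 := Nat.divisor_le hd
                have h2 := Nat.pos_of_mem_divisors hd
                omega)
          _ = n := by rw [Nat.card_Ico]; omega
    _ = n ^ (k + 1) := by ring

lemma sig_one_one : sig 1 1 = 1 := by simp [sig]

/-- q on the critical line: qq(1/2 + ib) = -exp(-2πb) -/
lemma qq_line (b : ℝ) :
    qq ((1 / 2 : ℂ) + Complex.I * b) = -((Real.exp (-(2 * Real.pi * b)) : ℝ) : ℂ) := by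
  rw [qq]
  have h : 2 * (Real.pi : ℂ) * Complex.I * ((1 / 2 : ℂ) + Complex.I * b) =
      (Real.pi : ℂ) * Complex.I + ((-(2 * Real.pi * b) : ℝ) : ℂ) := by
    push_cast
    linear_combination (2 * (Real.pi : ℂ) * (b : ℂ)) * Complex.I_sq
  rw [h, Complex.exp_add, Complex.exp_pi_mul_I, ← Complex.ofReal_exp]
  ring

/-- powers of q on the critical line, in exponential form -/
lemma qq_line_pow (b : ℝ) (m : ℕ) :
    qq ((1 / 2 : ℂ) + Complex.I * b) ^ m =
      Complex.exp ((m : ℂ) * ((Real.pi : ℂ) * Complex.I + ((-(2 * Real.pi) : ℝ) : ℂ) * (b : ℂ))) := by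
  rw [Complex.exp_nat_mul, qq_line]
  congr 1
  rw [Complex.exp_add, Complex.exp_pi_mul_I]
  rw [show ((-(2 * Real.pi) : ℝ) : ℂ) * (b : ℂ) = ((-(2 * Real.pi * b) : ℝ) : ℂ) from by
    push_cast; ring]
  rw [← Complex.ofReal_exp]
  ring





noncomputable def S1 (w : ℂ) : ℂ := ∑' n : ℕ, ((sig 1 n : ℕ) : ℂ) * w ^ n
noncomputable def S3 (w : ℂ) : ℂ := ∑' n : ℕ, ((sig 3 n : ℕ) : ℂ) * w ^ n
noncomputable def SS (w : ℂ) : ℂ := ∑' n : ℕ, ((n : ℂ) * ((sig 1 n : ℕ) : ℂ)) * w ^ n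
def convN (n : ℕ) : ℕ := ∑ p ∈ Finset.HasAntidiagonal.antidiagonal n, sig 1 p.1 * sig 1 p.2

lemma nat_cast_norm (m : ℕ) : ‖((m : ℕ) : ℂ)‖ = (m : ℝ) := by
  rw [Complex.norm_natCast]

lemma summable_norm_S1 {w : ℂ} (hw : ‖w‖ < 1) :
    Summable fun n : ℕ => ‖((sig 1 n : ℕ) : ℂ) * w ^ n‖ := by
  apply Summable.of_nonneg_of_le (fun n => norm_nonneg _)
    (fun n => ?_) (summable_pow_mul_geometric_of_norm_lt_one 2
      (r := ‖w‖) (by rwa [Real.norm_eq_abs, _root_.abs_of_nonneg (norm_nonneg w)]))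
  rw [norm_mul, norm_pow, nat_cast_norm]
  apply mul_le_mul_of_nonneg_right _ (pow_nonneg (norm_nonneg w) n)
  calc ((sig 1 n : ℕ) : ℝ) ≤ ((n ^ 2 : ℕ) : ℝ) := by exact_mod_cast sig_le 1 n
    _ = (n : ℝ) ^ 2 := by push_cast; ring

lemma summable_norm_S3 {w : ℂ} (hw : ‖w‖ < 1) :
    Summable fun n : ℕ => ‖((sig 3 n : ℕ) : ℂ) * w ^ n‖ := by
  apply Summable.of_nonneg_of_le (fun n => norm_nonneg _)
    (fun n => ?_) (summable_pow_mul_geometric_of_norm_lt_one 4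
      (r := ‖w‖) (by rwa [Real.norm_eq_abs, _root_.abs_of_nonneg (norm_nonneg w)]))
  rw [norm_mul, norm_pow, nat_cast_norm]
  apply mul_le_mul_of_nonneg_right _ (pow_nonneg (norm_nonneg w) n)
  calc ((sig 3 n : ℕ) : ℝ) ≤ ((n ^ 4 : ℕ) : ℝ) := by exact_mod_cast sig_le 3 n
    _ = (n : ℝ) ^ 4 := by push_cast; ring

lemma summable_norm_SS {w : ℂ} (hw : ‖w‖ < 1) :
    Summable fun n : ℕ => ‖((n : ℂ) * ((sig 1 n : ℕ) : ℂ)) * w ^ n‖ := by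
  apply Summable.of_nonneg_of_le (fun n => norm_nonneg _)
    (fun n => ?_) (summable_pow_mul_geometric_of_norm_lt_one 3
      (r := ‖w‖) (by rwa [Real.norm_eq_abs, _root_.abs_of_nonneg (norm_nonneg w)]))
  rw [norm_mul, norm_mul, norm_pow, nat_cast_norm, Complex.norm_natCast]
  apply mul_le_mul_of_nonneg_right _ (pow_nonneg (norm_nonneg w) n)
  calc (n : ℝ) * ((sig 1 n : ℕ) : ℝ) ≤ (n : ℝ) * ((n ^ 2 : ℕ) : ℝ) := by
        apply mul_le_mul_of_nonneg_left _ (Nat.cast_nonneg n)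
        exact_mod_cast sig_le 1 n
    _ = (n : ℝ) ^ 3 := by push_cast; ring

lemma summable_S1 {w : ℂ} (hw : ‖w‖ < 1) :
    Summable fun n : ℕ => ((sig 1 n : ℕ) : ℂ) * w ^ n :=
  (summable_norm_S1 hw).of_norm

lemma summable_S3 {w : ℂ} (hw : ‖w‖ < 1) :
    Summable fun n : ℕ => ((sig 3 n : ℕ) : ℂ) * w ^ n :=
  (summable_norm_S3 hw).of_norm

lemma summable_SS {w : ℂ} (hw : ‖w‖ < 1) :
    Summable fun n : ℕ => ((n : ℂ) * ((sig 1 n : ℕ) : ℂ)) * w ^ n :=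
  (summable_norm_SS hw).of_norm

lemma S1_sq {w : ℂ} (hw : ‖w‖ < 1) :
    S1 w * S1 w = ∑' n : ℕ, ((convN n : ℕ) : ℂ) * w ^ n := by
  rw [S1, tsum_mul_tsum_eq_tsum_sum_antidiagonal_of_summable_norm
    (summable_norm_S1 hw) (summable_norm_S1 hw)]
  apply tsum_congr
  intro n
  have e : ∀ p ∈ Finset.HasAntidiagonal.antidiagonal n,
      ((sig 1 p.1 : ℕ) : ℂ) * w ^ p.1 * (((sig 1 p.2 : ℕ) : ℂ) * w ^ p.2) =
      (((sig 1 p.1 * sig 1 p.2 : ℕ)) : ℂ) * w ^ n := by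
    intro p hp
    rw [Finset.HasAntidiagonal.mem_antidiagonal] at hp
    rw [← hp, pow_add]
    push_cast
    ring
  rw [Finset.sum_congr rfl e, ← Finset.sum_mul, convN]
  congr 1
  push_cast
  rfl

lemma besge_nat (n : ℕ) :
    12 * convN n + 6 * n * sig 1 n = 5 * sig 3 n + sig 1 n := by
  have h := besge n
  have h2 : ∑ p ∈ Finset.HasAntidiagonal.antidiagonal n, (sig 1 p.1 : ℚ) * (sig 1 p.2 : ℚ) =
      ((convN n : ℕ) : ℚ) := by
    rw [convN]
    push_cast
    rfl
  rw [h2] at h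
  exact_mod_cast h

lemma besge_C (n : ℕ) :
    576 * ((convN n : ℕ) : ℂ) =
      48 * ((sig 1 n : ℕ) : ℂ) + 240 * ((sig 3 n : ℕ) : ℂ) -
        288 * (n : ℂ) * ((sig 1 n : ℕ) : ℂ) := by
  have h := besge_nat n
  have h' : ((12 * convN n + 6 * n * sig 1 n : ℕ) : ℂ) =
      ((5 * sig 3 n + sig 1 n : ℕ) : ℂ) := by exact_mod_cast h
  push_cast at h'
  linear_combination 48 * h'

/-- Ramanujan's identity in series form -/
lemma ramanujan {w : ℂ} (hw : ‖w‖ < 1) :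
    (1 - 24 * S1 w) ^ 2 - (1 + 240 * S3 w) = -288 * SS w := by
  have hD := S1_sq hw
  have key : 576 * (∑' n : ℕ, ((convN n : ℕ) : ℂ) * w ^ n) =
      48 * S1 w + 240 * S3 w - 288 * SS w := by
    rw [← tsum_mul_left]
    have e : ∀ n : ℕ, 576 * (((convN n : ℕ) : ℂ) * w ^ n) =
        48 * (((sig 1 n : ℕ) : ℂ) * w ^ n) + 240 * (((sig 3 n : ℕ) : ℂ) * w ^ n) -
          288 * (((n : ℂ) * ((sig 1 n : ℕ) : ℂ)) * w ^ n) := by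
      intro n
      have := besge_C n
      linear_combination w ^ n * this
    rw [tsum_congr e]
    rw [Summable.tsum_sub (((summable_S1 hw).mul_left 48).add ((summable_S3 hw).mul_left 240))
      ((summable_SS hw).mul_left 288)]
    rw [Summable.tsum_add ((summable_S1 hw).mul_left 48) ((summable_S3 hw).mul_left 240)]
    rw [tsum_mul_left, tsum_mul_left, tsum_mul_left]
    rw [S1, S3, SS]
  linear_combination 576 * hD + key





lemma sig_zero_eq (k : ℕ) : sig k 0 = 0 := by simp [sig]

lemma S1_shift {w : ℂ} (hw : ‖w‖ < 1) :
    ∑' n : ℕ, ((sig 1 (n + 1) : ℕ) : ℂ) * w ^ (n + 1) = S1 w := by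
  rw [S1, Summable.tsum_eq_zero_add (summable_S1 hw), sig_zero_eq]
  simp

lemma S3_shift {w : ℂ} (hw : ‖w‖ < 1) :
    ∑' n : ℕ, ((sig 3 (n + 1) : ℕ) : ℂ) * w ^ (n + 1) = S3 w := by
  rw [S3, Summable.tsum_eq_zero_add (summable_S3 hw), sig_zero_eq]
  simp

lemma SS_shift {w : ℂ} (hw : ‖w‖ < 1) :
    ∑' n : ℕ, (((n + 1 : ℕ)) : ℂ) * ((sig 1 (n + 1) : ℕ) : ℂ) * w ^ (n + 1) = SS w := by
  rw [SS, Summable.tsum_eq_zero_add (summable_SS hw)]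
  simp [mul_assoc]

/-- real-cast values -/
lemma S1_real (r : ℝ) :
    S1 ((r : ℝ) : ℂ) = ((∑' n : ℕ, ((sig 1 n : ℕ) : ℝ) * r ^ n : ℝ) : ℂ) := by
  rw [Complex.ofReal_tsum, S1]
  apply tsum_congr
  intro n
  push_cast
  ring

lemma SS_real (r : ℝ) :
    SS ((r : ℝ) : ℂ) = ((∑' n : ℕ, (n : ℝ) * ((sig 1 n : ℕ) : ℝ) * r ^ n : ℝ) : ℂ) := by
  rw [Complex.ofReal_tsum, SS]
  apply tsum_congr
  intro n
  push_cast
  ring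

lemma cube_bound (n : ℕ) : ((n : ℝ) + 2) ^ 3 ≤ 8 * 10 ^ n := by
  induction n with
  | zero => norm_num
  | succ k ih =>
    have hk : (0 : ℝ) ≤ (k : ℝ) := Nat.cast_nonneg k
    have hk2 : (0 : ℝ) ≤ (k : ℝ) ^ 2 := by positivity
    have hk3 : (0 : ℝ) ≤ (k : ℝ) ^ 3 := by positivity
    push_cast
    calc ((k : ℝ) + 1 + 2) ^ 3 ≤ 10 * ((k : ℝ) + 2) ^ 3 := by nlinarith
      _ ≤ 10 * (8 * 10 ^ k) := by linarith
      _ = 8 * 10 ^ (k + 1) := by ring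

lemma summable_SS_real {x : ℝ} (hx : |x| < 1) :
    Summable fun n : ℕ => (n : ℝ) * ((sig 1 n : ℕ) : ℝ) * (-x) ^ n := by
  apply Summable.of_norm
  apply Summable.of_nonneg_of_le (fun n => norm_nonneg _) (fun n => ?_)
    (summable_pow_mul_geometric_of_norm_lt_one 3
      (r := |x|) (by rwa [Real.norm_eq_abs, _root_.abs_abs]))
  rw [Real.norm_eq_abs, _root_.abs_mul, _root_.abs_mul, _root_.abs_pow, _root_.abs_neg]
  have h1 : |(n : ℝ)| = (n : ℝ) := _root_.abs_of_nonneg (Nat.cast_nonneg n)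
  have h2 : |((sig 1 n : ℕ) : ℝ)| = ((sig 1 n : ℕ) : ℝ) := _root_.abs_of_nonneg (Nat.cast_nonneg _)
  rw [h1, h2]
  apply mul_le_mul_of_nonneg_right _ (pow_nonneg (abs_nonneg x) n)
  calc (n : ℝ) * ((sig 1 n : ℕ) : ℝ) ≤ (n : ℝ) * ((n ^ 2 : ℕ) : ℝ) := by
        apply mul_le_mul_of_nonneg_left _ (Nat.cast_nonneg n)
        exact_mod_cast sig_le 1 n
    _ = (n : ℝ) ^ 3 := by push_cast; ring

/-- negativity of ∑ n σ(n) (-x)^n for 0 < x ≤ 1/20 -/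
lemma SS_neg {x : ℝ} (hx0 : 0 < x) (hx : x ≤ 1 / 20) :
    (∑' n : ℕ, (n : ℝ) * ((sig 1 n : ℕ) : ℝ) * (-x) ^ n) < 0 := by
  have hx1 : |x| < 1 := by rw [_root_.abs_of_pos hx0]; linarith
  set f : ℕ → ℝ := fun n => (n : ℝ) * ((sig 1 n : ℕ) : ℝ) * (-x) ^ n with hf
  have hsum : Summable f := summable_SS_real hx1
  have hsum1 : Summable fun n => f (n + 1) := (summable_nat_add_iff 1).2 hsum
  have e1 : ∑' n, f n = f 0 + (f 1 + ∑' n, f (n + 1 + 1)) := by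
    rw [Summable.tsum_eq_zero_add hsum, Summable.tsum_eq_zero_add hsum1]
  have hf0 : f 0 = 0 := by simp [hf]
  have hf1 : f 1 = -x := by simp [hf, sig_one_one]
  have hterm : ∀ n : ℕ, ‖f (n + 1 + 1)‖ ≤ (8 * x ^ 2) * (1 / 2) ^ n := by
    intro n
    rw [hf]
    simp only
    rw [Real.norm_eq_abs, _root_.abs_mul, _root_.abs_mul, _root_.abs_pow, _root_.abs_neg,
      _root_.abs_of_nonneg (Nat.cast_nonneg (n + 1 + 1)),
      _root_.abs_of_nonneg (Nat.cast_nonneg (sig 1 (n + 1 + 1))), _root_.abs_of_pos hx0]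
    have hsig : ((sig 1 (n + 1 + 1) : ℕ) : ℝ) ≤ ((n : ℝ) + 2) ^ 2 := by
      calc ((sig 1 (n + 1 + 1) : ℕ) : ℝ) ≤ (((n + 1 + 1) ^ 2 : ℕ) : ℝ) := by
            exact_mod_cast sig_le 1 (n + 1 + 1)
        _ = ((n : ℝ) + 2) ^ 2 := by push_cast; ring
    have hxn : x ^ n ≤ (1 / 20) ^ n := pow_le_pow_left₀ (le_of_lt hx0) hx n
    have hcube := cube_bound n
    calc ((n + 1 + 1 : ℕ) : ℝ) * ((sig 1 (n + 1 + 1) : ℕ) : ℝ) * x ^ (n + 1 + 1)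
        ≤ ((n : ℝ) + 2) ^ 3 * x ^ (n + 1 + 1) := by
          apply mul_le_mul_of_nonneg_right _ (pow_nonneg (le_of_lt hx0) _)
          have hc1 : ((n + 1 + 1 : ℕ) : ℝ) = (n : ℝ) + 2 := by push_cast; ring
          rw [hc1]
          calc ((n : ℝ) + 2) * ((sig 1 (n + 1 + 1) : ℕ) : ℝ)
              ≤ ((n : ℝ) + 2) * ((n : ℝ) + 2) ^ 2 := by
                apply mul_le_mul_of_nonneg_left hsig (by positivity)
            _ = ((n : ℝ) + 2) ^ 3 := by ring
      _ = (((n : ℝ) + 2) ^ 3 * x ^ n) * x ^ 2 := by ring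
      _ ≤ ((8 * 10 ^ n) * (1 / 20) ^ n) * x ^ 2 := by
          apply mul_le_mul_of_nonneg_right _ (by positivity)
          apply mul_le_mul hcube hxn (by positivity) (by positivity)
      _ = (8 * x ^ 2) * (1 / 2) ^ n := by
          have : ((10 : ℝ) ^ n * (1 / 20) ^ n) = (1 / 2) ^ n := by
            rw [← mul_pow]; norm_num
          calc 8 * 10 ^ n * (1 / 20) ^ n * x ^ 2 = 8 * ((10 : ℝ) ^ n * (1 / 20) ^ n) * x ^ 2 := by
                ring
            _ = 8 * (1 / 2 : ℝ) ^ n * x ^ 2 := by rw [this]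
            _ = (8 * x ^ 2) * (1 / 2) ^ n := by ring
  have hgeom : Summable fun n : ℕ => (8 * x ^ 2) * (1 / 2 : ℝ) ^ n :=
    (summable_geometric_of_lt_one (by norm_num) (by norm_num)).mul_left _
  have hsn : Summable fun n => ‖f (n + 1 + 1)‖ :=
    hgeom.of_nonneg_of_le (fun n => norm_nonneg _) hterm
  have tail_bound : |∑' n, f (n + 1 + 1)| ≤ 16 * x ^ 2 := by
    calc |∑' n, f (n + 1 + 1)| ≤ ∑' n, ‖f (n + 1 + 1)‖ := by
          rw [← Real.norm_eq_abs]
          exact norm_tsum_le_tsum_norm hsn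
      _ ≤ ∑' n : ℕ, (8 * x ^ 2) * (1 / 2 : ℝ) ^ n :=
          Summable.tsum_le_tsum hterm (hsn.congr (fun n => rfl)) hgeom
      _ = (8 * x ^ 2) * (1 - 1 / 2)⁻¹ := by
          rw [tsum_mul_left, tsum_geometric_of_lt_one (by norm_num) (by norm_num)]
      _ = 16 * x ^ 2 := by norm_num; ring
  have h16 : 16 * x ^ 2 < x := by nlinarith
  have habs := abs_le.1 tail_bound
  rw [e1, hf0, hf1]
  have hns : Summable fun n => ‖f (n + 1 + 1)‖ := hsn
  linarith [habs.2]




/-- the n-th term of the E₂ series on the critical line, as a function of b -/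
noncomputable def termF (n : ℕ) (b : ℝ) : ℂ :=
  ((sig 1 (n + 1) : ℕ) : ℂ) *
    Complex.exp ((((n + 1 : ℕ)) : ℂ) *
      ((Real.pi : ℂ) * Complex.I + ((-(2 * Real.pi) : ℝ) : ℂ) * (b : ℂ)))

/-- derivative coefficient of the n-th term -/
noncomputable def dtermF (n : ℕ) (b : ℝ) : ℂ :=
  (((-(2 * Real.pi)) * ((n : ℝ) + 1) : ℝ) : ℂ) * termF n b

lemma termF_eq (n : ℕ) (b : ℝ) :
    termF n b = sigmaC 1 (n + 1) * qq ((1 / 2 : ℂ) + Complex.I * b) ^ (n + 1) := by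
  rw [termF, sigmaC_eq_sig, qq_line_pow]

lemma termF_hasDeriv (n : ℕ) (b : ℝ) : HasDerivAt (termF n) (dtermF n b) b := by
  have h0 : HasDerivAt (fun t : ℝ => ((t : ℝ) : ℂ)) 1 b := by
    simpa using (hasDerivAt_id b).ofReal_comp
  have h1 : HasDerivAt (fun t : ℝ => ((-(2 * Real.pi) : ℝ) : ℂ) * ((t : ℝ) : ℂ))
      ((-(2 * Real.pi) : ℝ) : ℂ) b := by
    simpa using h0.const_mul (((-(2 * Real.pi) : ℝ) : ℂ))
  have h2 := h1.const_add ((Real.pi : ℂ) * Complex.I)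
  have h3 := ((h2.const_mul (((n + 1 : ℕ)) : ℂ)).cexp).const_mul ((sig 1 (n + 1) : ℕ) : ℂ)
  have h4 : HasDerivAt (termF n)
      (((sig 1 (n + 1) : ℕ) : ℂ) *
        (Complex.exp ((((n + 1 : ℕ)) : ℂ) *
          ((Real.pi : ℂ) * Complex.I + ((-(2 * Real.pi) : ℝ) : ℂ) * (b : ℂ))) *
          ((((n + 1 : ℕ)) : ℂ) * ((-(2 * Real.pi) : ℝ) : ℂ)))) b := h3
  have : dtermF n b = ((sig 1 (n + 1) : ℕ) : ℂ) *
      (Complex.exp ((((n + 1 : ℕ)) : ℂ) *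
        ((Real.pi : ℂ) * Complex.I + ((-(2 * Real.pi) : ℝ) : ℂ) * (b : ℂ))) *
        ((((n + 1 : ℕ)) : ℂ) * ((-(2 * Real.pi) : ℝ) : ℂ))) := by
    rw [dtermF, termF]
    push_cast
    ring
  rw [this]
  exact h4

lemma termF_norm (n : ℕ) (b : ℝ) :
    ‖termF n b‖ = ((sig 1 (n + 1) : ℕ) : ℝ) * Real.exp (-(2 * Real.pi * b)) ^ (n + 1) := by
  rw [termF_eq, norm_mul, sigmaC_eq_sig, nat_cast_norm, norm_pow, qq_line, norm_neg,
    Complex.norm_real, Real.norm_eq_abs, _root_.abs_of_pos (Real.exp_pos _)]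

lemma exp_line_le {b : ℝ} (hb : (1 / 4 : ℝ) ≤ b) :
    Real.exp (-(2 * Real.pi * b)) ≤ Real.exp (-(Real.pi / 2)) := by
  apply Real.exp_le_exp.2
  have hπ := Real.pi_gt_three
  nlinarith

lemma rho_lt_one : Real.exp (-(Real.pi / 2)) < 1 := by
  rw [show (1 : ℝ) = Real.exp 0 from (Real.exp_zero).symm]
  apply Real.exp_lt_exp.2
  have := Real.pi_gt_three
  linarith

lemma rho_nonneg : 0 ≤ Real.exp (-(Real.pi / 2)) := (Real.exp_pos _).le

lemma summable_cube_rho :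
    Summable fun n : ℕ => (((n : ℝ) + 1) ^ 3 * Real.exp (-(Real.pi / 2)) ^ (n + 1)) := by
  have base : Summable (fun n : ℕ => (n : ℝ) ^ 3 * Real.exp (-(Real.pi / 2)) ^ n) :=
    summable_pow_mul_geometric_of_norm_lt_one 3
      (by rw [Real.norm_eq_abs, _root_.abs_of_nonneg rho_nonneg]; exact rho_lt_one)
  have := (summable_nat_add_iff 1).2 base
  apply this.congr
  intro n
  push_cast
  ring

lemma sig_succ_sq (n : ℕ) : ((sig 1 (n + 1) : ℕ) : ℝ) ≤ ((n : ℝ) + 1) ^ 2 := by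
  calc ((sig 1 (n + 1) : ℕ) : ℝ) ≤ (((n + 1) ^ 2 : ℕ) : ℝ) := by
        exact_mod_cast sig_le 1 (n + 1)
    _ = ((n : ℝ) + 1) ^ 2 := by push_cast; ring

lemma termF_bound (n : ℕ) : ∀ b ∈ Set.Ioi (1 / 4 : ℝ),
    ‖termF n b‖ ≤ ((n : ℝ) + 1) ^ 2 * Real.exp (-(Real.pi / 2)) ^ (n + 1) := by
  intro b hb
  rw [termF_norm]
  have hb' : (1 / 4 : ℝ) ≤ b := le_of_lt hb
  apply mul_le_mul (sig_succ_sq n)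
    (pow_le_pow_left₀ (Real.exp_pos _).le (exp_line_le hb') _)
    (pow_nonneg (Real.exp_pos _).le _) (by positivity)

lemma dtermF_bound (n : ℕ) : ∀ b ∈ Set.Ioi (1 / 4 : ℝ),
    ‖dtermF n b‖ ≤ (2 * Real.pi) * (((n : ℝ) + 1) ^ 3 * Real.exp (-(Real.pi / 2)) ^ (n + 1)) := by
  intro b hb
  rw [dtermF, norm_mul, Complex.norm_real, Real.norm_eq_abs]
  have habs : |(-(2 * Real.pi)) * ((n : ℝ) + 1)| = (2 * Real.pi) * ((n : ℝ) + 1) := by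
    rw [_root_.abs_mul, _root_.abs_neg, _root_.abs_of_pos Real.two_pi_pos,
      _root_.abs_of_pos (by positivity : (0 : ℝ) < (n : ℝ) + 1)]
  rw [habs]
  have h := termF_bound n b hb
  calc 2 * Real.pi * ((n : ℝ) + 1) * ‖termF n b‖
      ≤ 2 * Real.pi * ((n : ℝ) + 1) *
        (((n : ℝ) + 1) ^ 2 * Real.exp (-(Real.pi / 2)) ^ (n + 1)) := by
        apply mul_le_mul_of_nonneg_left h (by positivity)
    _ = (2 * Real.pi) * (((n : ℝ) + 1) ^ 3 * Real.exp (-(Real.pi / 2)) ^ (n + 1)) := by ring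

lemma summable_termF {b : ℝ} (hb : (1 / 4 : ℝ) < b) : Summable fun n => termF n b := by
  apply Summable.of_norm
  have h1 : ∀ n : ℕ, ‖termF n b‖ ≤ ((n : ℝ) + 1) ^ 3 * Real.exp (-(Real.pi / 2)) ^ (n + 1) := by
    intro n
    refine le_trans (termF_bound n b hb) ?_
    apply mul_le_mul_of_nonneg_right _ (pow_nonneg (Real.exp_pos _).le _)
    have hn : (0 : ℝ) ≤ (n : ℝ) := Nat.cast_nonneg n
    nlinarith [sq_nonneg ((n : ℝ) + 1)]
  exact Summable.of_nonneg_of_le (fun n => norm_nonneg _) h1 summable_cube_rho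

/-- termwise differentiation of the series -/
lemma hasDerivAt_tsum_termF {b : ℝ} (hb : (1 / 4 : ℝ) < b) :
    HasDerivAt (fun t => ∑' n, termF n t) (∑' n, dtermF n b) b := by
  apply hasDerivAt_of_tendstoUniformlyOn (isOpen_Ioi (a := (1 / 4 : ℝ)))
    (tendstoUniformlyOn_tsum_nat (summable_cube_rho.mul_left (2 * Real.pi))
      (fun n x hx => dtermF_bound n x hx))
    (Filter.Eventually.of_forall
      (fun N => fun x _ => HasDerivAt.sum (fun i _ => termF_hasDeriv i x)))
    (fun x hx => by simp only [Finset.sum_apply]; exact (summable_termF hx).hasSum.tendsto_sum_nat)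
    hb

lemma qq_line_norm (b : ℝ) :
    ‖qq ((1 / 2 : ℂ) + Complex.I * b)‖ = Real.exp (-(2 * Real.pi * b)) := by
  rw [qq_line, norm_neg, Complex.norm_real, Real.norm_eq_abs,
    _root_.abs_of_pos (Real.exp_pos _)]

lemma dtermF_tsum_eq {b : ℝ} (hq : ‖qq ((1 / 2 : ℂ) + Complex.I * b)‖ < 1) :
    ∑' n, dtermF n b =
      ((-(2 * Real.pi) : ℝ) : ℂ) * SS (qq ((1 / 2 : ℂ) + Complex.I * b)) := by
  rw [← SS_shift hq, ← tsum_mul_left]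
  apply tsum_congr
  intro n
  rw [dtermF, termF_eq, sigmaC_eq_sig]
  push_cast
  ring

lemma eta1_line_expr (b : ℝ) :
    eta1 ((1 / 2 : ℂ) + Complex.I * b) =
      ((Real.pi : ℂ) ^ 2 / 3) * (1 - 24 * ∑' n, termF n b) := by
  rw [eta1, E2]
  congr 3
  exact tsum_congr (fun n => (termF_eq n b).symm)


lemma x_le_20 {b : ℝ} (hb : (1 / 2 : ℝ) ≤ b) :
    Real.exp (-(2 * Real.pi * b)) ≤ 1 / 20 := by
  have hπ := Real.pi_gt_three
  have h1 : Real.exp (-(2 * Real.pi * b)) ≤ Real.exp (-(3 : ℝ)) :=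
    Real.exp_le_exp.2 (by nlinarith)
  have h3 : Real.exp (-(3 : ℝ)) ≤ 1 / 20 := by
    rw [Real.exp_neg]
    have he3 : Real.exp (3 : ℝ) = Real.exp 1 ^ 3 := by
      rw [show (3 : ℝ) = ((3 : ℕ) : ℝ) * 1 from by norm_num, Real.exp_nat_mul]
    have he := Real.exp_one_gt_d9
    have h20 : (20 : ℝ) ≤ Real.exp (3 : ℝ) := by
      rw [he3]
      have hcube : (20 : ℝ) ≤ (2.7182818283 : ℝ) ^ 3 := by norm_num
      have hmono : (2.7182818283 : ℝ) ^ 3 ≤ Real.exp 1 ^ 3 :=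
        pow_le_pow_left₀ (by norm_num) he.le 3
      linarith
    rw [show (1 : ℝ) / 20 = ((20 : ℝ))⁻¹ from by norm_num]
    exact inv_anti₀ (by norm_num) h20
  linarith

lemma q_norm_lt {b : ℝ} (hb : (1 / 4 : ℝ) ≤ b) :
    ‖qq ((1 / 2 : ℂ) + Complex.I * b)‖ < 1 := by
  rw [qq_line_norm]
  exact lt_of_le_of_lt (exp_line_le hb) rho_lt_one

lemma SS_line (b : ℝ) :
    SS (qq ((1 / 2 : ℂ) + Complex.I * b)) =
      ((∑' n : ℕ, (n : ℝ) * ((sig 1 n : ℕ) : ℝ) *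
        (-Real.exp (-(2 * Real.pi * b))) ^ n : ℝ) : ℂ) := by
  have hc : -((Real.exp (-(2 * Real.pi * b)) : ℝ) : ℂ) =
      (((-Real.exp (-(2 * Real.pi * b)) : ℝ)) : ℂ) := by push_cast; ring
  rw [qq_line, hc, SS_real]

lemma S1_line (b : ℝ) :
    S1 (qq ((1 / 2 : ℂ) + Complex.I * b)) =
      ((∑' n : ℕ, ((sig 1 n : ℕ) : ℝ) *
        (-Real.exp (-(2 * Real.pi * b))) ^ n : ℝ) : ℂ) := by
  have hc : -((Real.exp (-(2 * Real.pi * b)) : ℝ) : ℂ) =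
      (((-Real.exp (-(2 * Real.pi * b)) : ℝ)) : ℂ) := by push_cast; ring
  rw [qq_line, hc, S1_real]

lemma twelve_eta_sq (τ : ℂ) :
    12 * eta1 τ ^ 2 - g2 τ = (4 * (Real.pi : ℂ) ^ 4 / 3) * (E2 τ ^ 2 - E4 τ) := by
  rw [eta1, g2]; ring

lemma E2_eq_S1 {τ : ℂ} (hq : ‖qq τ‖ < 1) : E2 τ = 1 - 24 * S1 (qq τ) := by
  rw [E2]
  congr 2
  rw [← S1_shift hq]
  exact tsum_congr (fun n => by rw [sigmaC_eq_sig])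

lemma E4_eq_S3 {τ : ℂ} (hq : ‖qq τ‖ < 1) : E4 τ = 1 + 240 * S3 (qq τ) := by
  rw [E4]
  congr 2
  rw [← S3_shift hq]
  exact tsum_congr (fun n => by rw [sigmaC_eq_sig])

lemma eta1_im_zero {b : ℝ} (hb : (1 / 2 : ℝ) ≤ b) :
    (eta1 ((1 / 2 : ℂ) + Complex.I * b)).im = 0 := by
  have hq : ‖qq ((1 / 2 : ℂ) + Complex.I * b)‖ < 1 := q_norm_lt (by linarith)
  have h : eta1 ((1 / 2 : ℂ) + Complex.I * b) =
      ((Real.pi ^ 2 / 3 * (1 - 24 * ∑' n : ℕ, ((sig 1 n : ℕ) : ℝ) *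
        (-Real.exp (-(2 * Real.pi * b))) ^ n) : ℝ) : ℂ) := by
    rw [eta1, E2_eq_S1 hq, S1_line]
    push_cast
    ring
  rw [h, Complex.ofReal_im]

lemma main_core {b : ℝ} (hb : (1 / 2 : ℝ) ≤ b) :
    HasDerivAt (fun t : ℝ => (eta1 ((1 / 2 : ℂ) + Complex.I * t)).re)
      ((-1 / (24 * Real.pi)) *
        (12 * eta1 ((1 / 2 : ℂ) + Complex.I * b) ^ 2 -
          g2 ((1 / 2 : ℂ) + Complex.I * b)).re) b ∧
    (-1 / (24 * Real.pi)) *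
      (12 * eta1 ((1 / 2 : ℂ) + Complex.I * b) ^ 2 -
        g2 ((1 / 2 : ℂ) + Complex.I * b)).re < 0 := by
  have hb4 : (1 / 4 : ℝ) < b := by linarith
  have hq : ‖qq ((1 / 2 : ℂ) + Complex.I * b)‖ < 1 := q_norm_lt (by linarith)
  set x := Real.exp (-(2 * Real.pi * b)) with hx
  set L := ∑' n : ℕ, (n : ℝ) * ((sig 1 n : ℕ) : ℝ) * (-x) ^ n with hLdef
  have hSS : SS (qq ((1 / 2 : ℂ) + Complex.I * b)) = ((L : ℝ) : ℂ) := SS_line b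
  have hL : L < 0 := SS_neg (Real.exp_pos _) (x_le_20 hb)
  have hid : 12 * eta1 ((1 / 2 : ℂ) + Complex.I * b) ^ 2 - g2 ((1 / 2 : ℂ) + Complex.I * b) =
      ((-384 * Real.pi ^ 4 * L : ℝ) : ℂ) := by
    rw [twelve_eta_sq, E2_eq_S1 hq, E4_eq_S3 hq, ramanujan hq, hSS]
    push_cast
    ring
  have hD := hasDerivAt_tsum_termF hb4
  have hDer : HasDerivAt (fun t : ℝ => eta1 ((1 / 2 : ℂ) + Complex.I * t))
      (((Real.pi : ℂ) ^ 2 / 3) * (-(24 * ∑' n, dtermF n b))) b := by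
    have h2 := ((hD.const_mul (24 : ℂ)).const_sub 1).const_mul ((Real.pi : ℂ) ^ 2 / 3)
    have hfe : (fun t : ℝ => ((Real.pi : ℂ) ^ 2 / 3) * (1 - 24 * ∑' n, termF n t)) =
        fun t : ℝ => eta1 ((1 / 2 : ℂ) + Complex.I * t) := by
      funext t
      rw [eta1_line_expr]
    rw [hfe] at h2
    exact h2
  have hval : ((Real.pi : ℂ) ^ 2 / 3) * (-(24 * ∑' n, dtermF n b)) =
      ((16 * Real.pi ^ 3 * L : ℝ) : ℂ) := by
    rw [dtermF_tsum_eq hq, hSS]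
    push_cast
    ring
  rw [hval] at hDer
  have hre : HasDerivAt (fun t : ℝ => (eta1 ((1 / 2 : ℂ) + Complex.I * t)).re)
      (16 * Real.pi ^ 3 * L) b := by
    have hcomp := Complex.reCLM.hasFDerivAt.comp_hasDerivAt b hDer
    have heq : Complex.reCLM (((16 * Real.pi ^ 3 * L : ℝ)) : ℂ) = 16 * Real.pi ^ 3 * L := by
      rw [Complex.reCLM_apply, Complex.ofReal_re]
    rw [heq] at hcomp
    exact hcomp
  have htarget : (-1 / (24 * Real.pi)) *
      (12 * eta1 ((1 / 2 : ℂ) + Complex.I * b) ^ 2 -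
        g2 ((1 / 2 : ℂ) + Complex.I * b)).re = 16 * Real.pi ^ 3 * L := by
    rw [hid, Complex.ofReal_re]
    have hπ : Real.pi ≠ 0 := ne_of_gt Real.pi_pos
    field_simp
    ring
  refine ⟨htarget ▸ hre, ?_⟩
  rw [htarget]
  have hpos : (0 : ℝ) < 16 * Real.pi ^ 3 := by positivity
  exact mul_neg_of_pos_of_neg hpos hL

end Aux


theorem eta1_decreasing_on_half_line :
    (∀ b : ℝ, (1 / 2 : ℝ) ≤ b → (eta1 ((1 / 2 : ℂ) + Complex.I * b)).im = 0) ∧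
    StrictAntiOn (fun b : ℝ => (eta1 ((1 / 2 : ℂ) + Complex.I * b)).re) (Set.Ici (1 / 2 : ℝ)) ∧
    (∀ b : ℝ, (1 / 2 : ℝ) ≤ b →
      HasDerivAt (fun b : ℝ => (eta1 ((1 / 2 : ℂ) + Complex.I * b)).re)
        ((-1 / (24 * Real.pi)) *
          (12 * eta1 ((1 / 2 : ℂ) + Complex.I * b) ^ 2 - g2 ((1 / 2 : ℂ) + Complex.I * b)).re) b ∧
      (-1 / (24 * Real.pi)) *
          (12 * eta1 ((1 / 2 : ℂ) + Complex.I * b) ^ 2 - g2 ((1 / 2 : ℂ) + Complex.I * b)).re < 0) := by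
  refine ⟨fun b hb => eta1_im_zero hb, ?_, fun b hb => main_core hb⟩
  apply strictAntiOn_of_deriv_neg (convex_Ici _)
  · intro c hc
    exact ((main_core hc).1).continuousAt.continuousWithinAt
  · intro c hc
    rw [interior_Ici] at hc
    have h := main_core (le_of_lt hc)
    rw [h.1.deriv]
    exact h.2
end

section
/- Let y₁(z) := 1/℘''(z;τ) where ℘ is the Weierstrass ℘-function for the lattice ℤ+ℤτ, assuming g₂(τ) ≠ 0, and define χ(z) := 18℘(z)²℘'(z) + (1/2)g₂℘'(z) + 2g₂²z − 36g₃ζ(z). Then χ'(z) = 7℘''(z)², the quasi-periods of χ are χ(z+1) − χ(z) = 2(g₂² − 18η₁g₃) and χ(z+τ) − χ(z) = 2(g₂²τ − 18η₂g₃), and y₂ := y₁·χ is a second solution of the ODE y'' = (y₁''/y₁)·y linearly independent from y₁. -/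
open Complex

theorem weierstrass_second_solution
    (S : Set ℂ) (hS : IsOpen S)
    (P Z : ℂ → ℂ) (g2 g3 e1 e2 τ : ℂ)
    (hP : ∀ z ∈ S, ContDiffAt ℂ ⊤ P z)
    (hZ : ∀ z ∈ S, HasDerivAt Z (-(P z)) z)
    (hode : ∀ z ∈ S, (deriv P z) ^ 2 = 4 * P z ^ 3 - g2 * P z - g3)
    (hPP : ∀ z ∈ S, deriv (deriv P) z = 6 * P z ^ 2 - g2 / 2)
    (hper1 : ∀ z, z ∈ S → z + 1 ∈ S → P (z + 1) = P z ∧ deriv P (z + 1) = deriv P z)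
    (hperτ : ∀ z, z ∈ S → z + τ ∈ S → P (z + τ) = P z ∧ deriv P (z + τ) = deriv P z)
    (hq1 : ∀ z, z ∈ S → z + 1 ∈ S → Z (z + 1) - Z z = e1)
    (hq2 : ∀ z, z ∈ S → z + τ ∈ S → Z (z + τ) - Z z = e2)
    (hg2 : g2 ≠ 0) :
    let χ : ℂ → ℂ := fun z =>
      18 * P z ^ 2 * deriv P z + (1 / 2) * g2 * deriv P z + 2 * g2 ^ 2 * z - 36 * g3 * Z z
    let y1 : ℂ → ℂ := fun z => (deriv (deriv P) z)⁻¹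
    let y2 : ℂ → ℂ := fun z => y1 z * χ z
    (∀ z ∈ S, deriv χ z = 7 * (deriv (deriv P) z) ^ 2) ∧
    (∀ z, z ∈ S → z + 1 ∈ S → χ (z + 1) - χ z = 2 * (g2 ^ 2 - 18 * e1 * g3)) ∧
    (∀ z, z ∈ S → z + τ ∈ S → χ (z + τ) - χ z = 2 * (g2 ^ 2 * τ - 18 * e2 * g3)) ∧
    (∀ z ∈ S, deriv (deriv P) z ≠ 0 →
      deriv (deriv y2) z = (deriv (deriv y1) z / y1 z) * y2 z) ∧
    (∀ z ∈ S, deriv (deriv P) z ≠ 0 →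
      y1 z * deriv y2 z - deriv y1 z * y2 z ≠ 0) := by
  intro χ y1 y2
  -- analyticity
  have hPdiff : DifferentiableOn ℂ P S := fun z hz => ((hP z hz).differentiableAt
    (by simp)).differentiableWithinAt
  have hPa : AnalyticOnNhd ℂ P S := (analyticOnNhd_iff_differentiableOn hS).mpr hPdiff
  have hP'a : AnalyticOnNhd ℂ (deriv P) S := hPa.deriv
  have hQa : AnalyticOnNhd ℂ (deriv (deriv P)) S := hP'a.deriv
  have hQ'a : AnalyticOnNhd ℂ (deriv (deriv (deriv P))) S := hQa.deriv
  set Q : ℂ → ℂ := deriv (deriv P) with hQdef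
  -- basic HasDerivAt facts on S
  have hdP : ∀ z ∈ S, HasDerivAt P (deriv P z) z := fun z hz =>
    (hPa z hz).differentiableAt.hasDerivAt
  have hdP' : ∀ z ∈ S, HasDerivAt (deriv P) (Q z) z := fun z hz =>
    (hP'a z hz).differentiableAt.hasDerivAt
  have hdQ : ∀ z ∈ S, HasDerivAt Q (deriv Q z) z := fun z hz =>
    (hQa z hz).differentiableAt.hasDerivAt
  -- derivative of χ
  have hχd : ∀ z ∈ S, HasDerivAt χ (7 * Q z ^ 2) z := by
    intro z hz
    have h1 : HasDerivAt (fun w => 18 * P w ^ 2 * deriv P w)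
        (18 * (2 * P z * deriv P z) * deriv P z + 18 * P z ^ 2 * Q z) z := by
      have : HasDerivAt (fun w => 18 * P w ^ 2 * deriv P w)
          (18 * (((2 : ℕ) : ℂ) * P z ^ (2 - 1) * deriv P z) * deriv P z + 18 * P z ^ 2 * Q z) z :=
        (((hdP z hz).pow 2).const_mul (18 : ℂ)).mul (hdP' z hz)
      convert this using 1; ring
    have h2 : HasDerivAt (fun w => (1 / 2) * g2 * deriv P w) ((1 / 2) * g2 * Q z) z :=
      (hdP' z hz).const_mul _
    have h3 : HasDerivAt (fun w => 2 * g2 ^ 2 * w) (2 * g2 ^ 2) z := by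
      simpa using (hasDerivAt_id z).const_mul (2 * g2 ^ 2)
    have h4 : HasDerivAt (fun w => 36 * g3 * Z w) (36 * g3 * (-(P z))) z :=
      (hZ z hz).const_mul _
    have h : HasDerivAt χ
        (18 * (2 * P z * deriv P z) * deriv P z + 18 * P z ^ 2 * Q z
          + (1 / 2) * g2 * Q z + 2 * g2 ^ 2 - 36 * g3 * (-(P z))) z :=
      ((h1.add h2).add h3).sub h4
    convert h using 1
    linear_combination (-36 * P z) * hode z hz + (7 * Q z + 24 * P z ^ 2 - 4 * g2) * hPP z hz
  refine ⟨fun z hz => (hχd z hz).deriv, ?_, ?_, ?_, ?_⟩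
  · intro z hz hz1
    obtain ⟨hpp, hpp'⟩ := hper1 z hz hz1
    show _ - _ = _
    simp only [χ, hpp, hpp']
    linear_combination (-36 * g3) * hq1 z hz hz1
  · intro z hz hz1
    obtain ⟨hpp, hpp'⟩ := hperτ z hz hz1
    show _ - _ = _
    simp only [χ, hpp, hpp']
    linear_combination (-36 * g3) * hq2 z hz hz1
  -- key facts for the ODE parts
  · intro z hz hQ0
    have hy1d : ∀ w ∈ S, Q w ≠ 0 → HasDerivAt y1 (-(deriv Q w) / Q w ^ 2) w :=
      fun w hw hw0 => (hdQ w hw).inv hw0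
    have hy1a : AnalyticAt ℂ y1 z := (hQa z hz).inv hQ0
    have hy1'a : AnalyticAt ℂ (deriv y1) z := by
      rcases hy1a.exists_mem_nhds_analyticOnNhd with ⟨u, hu, hua⟩
      exact hua.deriv z (mem_of_mem_nhds hu)
    -- eventually in S and Q ≠ 0
    have hevS : ∀ᶠ w in nhds z, w ∈ S := hS.mem_nhds hz
    have hev : ∀ᶠ w in nhds z, w ∈ S ∧ Q w ≠ 0 :=
      hevS.and ((hQa z hz).continuousAt.eventually_ne hQ0)
    have hdy2ev : deriv y2 =ᶠ[nhds z] fun w => deriv y1 w * χ w + 7 * Q w := by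
      filter_upwards [hev] with w ⟨hw, hw0⟩
      have h1 : HasDerivAt y1 (deriv y1 w) w := (hy1d w hw hw0).differentiableAt.hasDerivAt
      have h2 : HasDerivAt y2 (deriv y1 w * χ w + y1 w * (7 * Q w ^ 2)) w :=
        h1.mul (hχd w hw)
      rw [h2.deriv]
      have : y1 w * (7 * Q w ^ 2) = 7 * Q w := by
        show (Q w)⁻¹ * (7 * Q w ^ 2) = 7 * Q w
        field_simp
      rw [this]
    have hy1'z : deriv y1 z = -(deriv Q z) / Q z ^ 2 := (hy1d z hz hQ0).deriv
    have hstep : HasDerivAt (fun w => deriv y1 w * χ w + 7 * Q w)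
        (deriv (deriv y1) z * χ z + deriv y1 z * (7 * Q z ^ 2) + 7 * deriv Q z) z :=
      (hy1'a.differentiableAt.hasDerivAt.mul (hχd z hz)).add ((hdQ z hz).const_mul 7)
    have hy2'' : deriv (deriv y2) z = deriv (deriv y1) z * χ z := by
      rw [hdy2ev.deriv_eq, hstep.deriv, hy1'z]
      field_simp
      ring
    rw [hy2'']
    show _ = deriv (deriv y1) z / (Q z)⁻¹ * ((Q z)⁻¹ * χ z)
    field_simp
  · intro z hz hQ0
    have hy1d : HasDerivAt y1 (-(deriv Q z) / Q z ^ 2) z := (hdQ z hz).inv hQ0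
    have hy2d : HasDerivAt y2 (deriv y1 z * χ z + y1 z * (7 * Q z ^ 2)) z := by
      have := (hy1d.differentiableAt.hasDerivAt.mul (hχd z hz))
      exact this
    rw [hy2d.deriv]
    show (Q z)⁻¹ * (deriv y1 z * χ z + (Q z)⁻¹ * (7 * Q z ^ 2)) -
      deriv y1 z * ((Q z)⁻¹ * χ z) ≠ 0
    have : (Q z)⁻¹ * (deriv y1 z * χ z + (Q z)⁻¹ * (7 * Q z ^ 2)) -
        deriv y1 z * ((Q z)⁻¹ * χ z) = 7 := by field_simp; ring
    rw [this]
    norm_num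
end
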